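/- arXiv:2510.22078 — 10 statements merged into one kernel-verified Lean document; each statement's English description precedes it below -/
import Mathlib

section
/- For e ≥ 3, the product of all odd positive integers less than 2^e is congruent to 2^e + 1 modulo 2^{e+1}. -/
private lemma prod_odd_split {M : Type*} [CommMonoid M] (f : ℕ → M) (n : ℕ) (hn : Even n) :
    ∏ j ∈ (Finset.range (2 * n)).filter (fun j => Odd j), f j
      = (∏ j ∈ (Finset.range n).filter (fun j => Odd j), f j) *
        ∏ j ∈ (Finset.range n).filter (fun j => Odd j), f (n + j) := by
  rw [Finset.prod_filter, Finset.prod_filter, Finset.prod_filter, two_mul,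
    Finset.prod_range_add]
  congr 1
  refine Finset.prod_congr rfl fun j _ => ?_
  have h : Odd (n + j) ↔ Odd j := by
    obtain ⟨r, hr⟩ := hn
    simp only [Nat.odd_iff]
    omega
  by_cases hj : Odd j <;> simp [hj, h]

private lemma prod_odd_reflect {M : Type*} [CommMonoid M] (f : ℕ → M) (m : ℕ) (hm : Even m) :
    ∏ k ∈ (Finset.range m).filter (fun j => Odd j), f (m + k)
      = ∏ k ∈ (Finset.range m).filter (fun j => Odd j), f (2 * m - k) := by
  refine Finset.prod_nbij' (fun k => m - k) (fun k => m - k) ?_ ?_ ?_ ?_ ?_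
  · intro a ha
    simp only [Finset.mem_filter, Finset.mem_range] at ha ⊢
    obtain ⟨h1, h2⟩ := ha
    have h3 : 1 ≤ a := h2.pos
    exact ⟨by omega, Nat.Even.sub_odd (by omega) hm h2⟩
  · intro a ha
    simp only [Finset.mem_filter, Finset.mem_range] at ha ⊢
    obtain ⟨h1, h2⟩ := ha
    have h3 : 1 ≤ a := h2.pos
    exact ⟨by omega, Nat.Even.sub_odd (by omega) hm h2⟩
  · intro a ha
    simp only [Finset.mem_filter, Finset.mem_range] at ha
    omega
  · intro a ha
    simp only [Finset.mem_filter, Finset.mem_range] at ha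
    omega
  · intro a ha
    simp only [Finset.mem_filter, Finset.mem_range] at ha
    congr 1
    omega

private lemma sq_step {n a b : ℕ} (hn : 2 ∣ n) (h : a ≡ b [MOD n]) :
    a * a ≡ b * b [MOD 2 * n] := by
  have h2 : a ≡ b [MOD 2] := h.of_dvd hn
  have hab : 2 ∣ a + b := by
    have h2' := h2
    simp only [Nat.ModEq] at h2'
    omega
  obtain ⟨s, hs⟩ := hab
  rw [Nat.modEq_iff_dvd] at h ⊢
  obtain ⟨t, ht⟩ := h
  refine ⟨t * s, ?_⟩
  have hs' : (a : ℤ) + b = 2 * s := by exact_mod_cast hs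
  push_cast
  linear_combination ((a : ℤ) + b) * ht + (n : ℤ) * t * hs'

theorem odd_prod_mod (e : ℕ) (he : 3 ≤ e) :
    (∏ j ∈ (Finset.range (2 ^ e)).filter (fun j => Odd j), j)
      ≡ 2 ^ e + 1 [MOD 2 ^ (e + 1)] := by
  induction e, he using Nat.le_induction with
  | base => decide
  | succ e he ih =>
    set m : ℕ := 2 ^ (e - 1) with hm
    have hme : 2 ^ e = 2 * m := by
      rw [hm, ← pow_succ']
      congr 1
      omega
    have hmeven : Even m := by
      rw [hm]
      exact Nat.even_pow.mpr ⟨even_two, by omega⟩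
    have h2e : Even (2 ^ e : ℕ) := by rw [hme]; exact even_two_mul m
    have hA : (∏ j ∈ (Finset.range (2 ^ (e+1))).filter (fun j => Odd j), j)
        = (∏ j ∈ (Finset.range (2 ^ e)).filter (fun j => Odd j), j) *
          ∏ j ∈ (Finset.range (2 ^ e)).filter (fun j => Odd j), (2 ^ e + j) := by
      rw [show (2:ℕ) ^ (e+1) = 2 * 2 ^ e by ring]
      exact prod_odd_split (fun j => j) (2 ^ e) h2e
    have hB : (∏ j ∈ (Finset.range (2 ^ e)).filter (fun j => Odd j), (2 ^ e + j))
        ≡ (∏ j ∈ (Finset.range (2 ^ e)).filter (fun j => Odd j), j) [MOD 2 ^ (e + 2)] := by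
      rw [← ZMod.natCast_eq_natCast_iff, Nat.cast_prod, Nat.cast_prod, hme,
        prod_odd_split (fun j => ((2 * m + j : ℕ) : ZMod (2 ^ (e+2)))) m hmeven,
        prod_odd_split (fun j => ((j : ℕ) : ZMod (2 ^ (e+2)))) m hmeven,
        prod_odd_reflect (fun j => ((2 * m + j : ℕ) : ZMod (2 ^ (e+2)))) m hmeven,
        prod_odd_reflect (fun j => ((j : ℕ) : ZMod (2 ^ (e+2)))) m hmeven,
        ← Finset.prod_mul_distrib, ← Finset.prod_mul_distrib]
      refine Finset.prod_congr rfl fun k hk => ?_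
      simp only [Finset.mem_filter, Finset.mem_range] at hk
      obtain ⟨hk1, hk2⟩ := hk
      obtain ⟨a, ha⟩ : ∃ a, 2 * m = k + a := ⟨2 * m - k, by omega⟩
      have h1 : 2 * m - k = a := by omega
      rw [h1]
      have hz : (8 : ZMod (2 ^ (e+2))) * (m : ZMod (2 ^ (e+2))) ^ 2 = 0 := by
        have h8 : (2:ℕ) ^ (e + 2) = 8 * m := by
          rw [hm, show e + 2 = 3 + (e - 1) by omega, pow_add]
          norm_num
        have hz0 : ((8 * m * m : ℕ) : ZMod (2 ^ (e+2))) = 0 := by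
          rw [show (8 * m * m : ℕ) = 2 ^ (e+2) * m from by rw [h8]]
          rw [Nat.cast_mul, ZMod.natCast_self, zero_mul]
        push_cast at hz0
        rw [pow_two, ← mul_assoc]
        exact hz0
      have hc : (k : ZMod (2 ^ (e+2))) + (a : ZMod (2 ^ (e+2)))
          = 2 * (m : ZMod (2 ^ (e+2))) := by
        have hc0 : ((2 * m : ℕ) : ZMod (2 ^ (e+2))) = ((k + a : ℕ) : ZMod (2 ^ (e+2))) := by
          rw [ha]
        push_cast at hc0
        linear_combination hc0.symm
      push_cast
      linear_combination (2 * (m : ZMod (2 ^ (e+2)))) * hc + hz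
    have hprod : (∏ j ∈ (Finset.range (2 ^ (e+1))).filter (fun j => Odd j), j)
        ≡ (∏ j ∈ (Finset.range (2 ^ e)).filter (fun j => Odd j), j) *
          (∏ j ∈ (Finset.range (2 ^ e)).filter (fun j => Odd j), j) [MOD 2 ^ (e + 2)] := by
      rw [hA]
      exact Nat.ModEq.mul_left _ hB
    have hsq : (∏ j ∈ (Finset.range (2 ^ e)).filter (fun j => Odd j), j) *
          (∏ j ∈ (Finset.range (2 ^ e)).filter (fun j => Odd j), j)
        ≡ (2 ^ e + 1) * (2 ^ e + 1) [MOD 2 ^ (e + 2)] := by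
      have h2n : 2 * 2 ^ (e + 1) = 2 ^ (e + 2) := by ring
      rw [← h2n]
      exact sq_step ⟨2 ^ e, by ring⟩ ih
    have hlast : (2 ^ e + 1) * (2 ^ e + 1) ≡ 2 ^ (e + 1) + 1 [MOD 2 ^ (e + 2)] := by
      have hexp : (2 ^ e + 1) * (2 ^ e + 1) = 2 ^ (2 * e) + 2 ^ (e + 1) + 1 := by
        rw [two_mul, pow_add, pow_succ]
        ring
      have hle : 2 ^ (e + 1) + 1 ≤ (2 ^ e + 1) * (2 ^ e + 1) := by
        rw [hexp, add_assoc]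
        exact Nat.le_add_left _ _
      rw [Nat.ModEq.comm, Nat.modEq_iff_dvd' hle]
      refine ⟨2 ^ (e - 2), ?_⟩
      have h2 : 2 ^ (e + 2) * 2 ^ (e - 2) = 2 ^ (2 * e) := by
        rw [← pow_add]; congr 1; omega
      rw [hexp, h2, add_assoc]
      omega
    exact (hprod.trans hsq).trans hlast
end

section
/- For e ≥ 3, the odd part of (2^{e-1})! is congruent to the odd part of (2^e)! modulo 2^e. -/
open Finset

private def Podd (n : ℕ) : ℕ := ∏ k ∈ Finset.range n, (2 * k + 1)

private lemma odd_prod (s : Finset ℕ) : Odd (∏ k ∈ s, (2 * k + 1)) :=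
  Finset.prod_induction _ Odd (fun _ _ ha hb => Nat.odd_mul.mpr ⟨ha, hb⟩) odd_one
    (fun k _ => ⟨k, by ring⟩)

private lemma Podd_odd (n : ℕ) : Odd (Podd n) := odd_prod _

private lemma fact_split (n : ℕ) :
    Nat.factorial (2 * n) = 2 ^ n * Nat.factorial n * Podd n := by
  induction n with
  | zero => simp [Podd]
  | succ n ih =>
    have h : 2 * (n + 1) = (2 * n + 1) + 1 := by ring
    rw [h, Nat.factorial_succ, Nat.factorial_succ, Podd, Finset.prod_range_succ,
      ← Podd, ih, Nat.factorial_succ]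
    ring

private lemma two_pow_zero (e : ℕ) : ((2 : ZMod (2 ^ (e + 1)))) ^ (e + 1) = 0 := by
  have := ZMod.natCast_self (2 ^ (e + 1))
  push_cast at this
  exact this

private lemma mul_odd_zmod (e m : ℕ) (hm : Odd m) :
    ((2 ^ e : ℕ) : ZMod (2 ^ (e + 1))) * (m : ZMod (2 ^ (e + 1)))
      = ((2 ^ e : ℕ) : ZMod (2 ^ (e + 1))) := by
  obtain ⟨a, ha⟩ := hm
  subst ha
  push_cast
  linear_combination ((a : ZMod (2 ^ (e + 1)))) * two_pow_zero e

private lemma sq_zmod (e : ℕ) (he : 1 ≤ e) :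
    ((2 ^ e : ℕ) : ZMod (2 ^ (e + 1))) * ((2 ^ e : ℕ) : ZMod (2 ^ (e + 1))) = 0 := by
  have h : (2 ^ e * 2 ^ e : ℕ) = 2 ^ (e + 1) * 2 ^ (e - 1) := by
    rw [← pow_add, ← pow_add]; congr 1; omega
  calc ((2 ^ e : ℕ) : ZMod (2 ^ (e + 1))) * ((2 ^ e : ℕ) : ZMod (2 ^ (e + 1)))
      = ((2 ^ e * 2 ^ e : ℕ) : ZMod (2 ^ (e + 1))) := by push_cast; ring
    _ = ((2 ^ (e + 1) * 2 ^ (e - 1) : ℕ) : ZMod (2 ^ (e + 1))) := by rw [h]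
    _ = 0 := by
        push_cast
        linear_combination ((2 : ZMod (2 ^ (e + 1))) ^ (e - 1)) * two_pow_zero e

private lemma prod_shift_zmod (e : ℕ) (he : 1 ≤ e) (s : Finset ℕ) :
    ((∏ k ∈ s, (2 * k + 1 + 2 ^ e) : ℕ) : ZMod (2 ^ (e + 1)))
      = ((∏ k ∈ s, (2 * k + 1) : ℕ) : ZMod (2 ^ (e + 1)))
        + (s.card : ZMod (2 ^ (e + 1))) * ((2 ^ e : ℕ) : ZMod (2 ^ (e + 1))) := by
  classical
  induction s using Finset.induction with
  | empty => simp
  | @insert a s hx ih =>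
    rw [Finset.prod_insert hx, Finset.prod_insert hx, Finset.card_insert_of_notMem hx]
    have h1 : ((2 ^ e : ℕ) : ZMod (2 ^ (e + 1))) * ((2 * a + 1 : ℕ) : ZMod (2 ^ (e + 1)))
        = ((2 ^ e : ℕ) : ZMod (2 ^ (e + 1))) := mul_odd_zmod e _ ⟨a, by ring⟩
    have h2 : ((2 ^ e : ℕ) : ZMod (2 ^ (e + 1)))
          * ((∏ k ∈ s, (2 * k + 1) : ℕ) : ZMod (2 ^ (e + 1)))
        = ((2 ^ e : ℕ) : ZMod (2 ^ (e + 1))) := mul_odd_zmod e _ (odd_prod s)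
    have h3 := sq_zmod e he
    rw [Nat.cast_mul, Nat.cast_mul, ih]
    push_cast at h1 h2 h3 ⊢
    linear_combination ((s.card : ZMod (2 ^ (e + 1)))) * h1 + h2
      + ((s.card : ZMod (2 ^ (e + 1)))) * h3

private lemma key (e : ℕ) (he : 3 ≤ e) : Podd (2 ^ (e - 1)) ≡ 1 [MOD 2 ^ e] := by
  induction e, he using Nat.le_induction with
  | base =>
    have h : Podd (2 ^ (3 - 1)) = 105 := by
      norm_num [Podd, Finset.prod_range_succ]
    rw [h]; decide
  | succ e he ih =>
    have hsplit : Podd (2 ^ e)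
        = Podd (2 ^ (e - 1)) * ∏ k ∈ Finset.range (2 ^ (e - 1)), (2 * k + 1 + 2 ^ e) := by
      have h2e : 2 ^ e = 2 ^ (e - 1) + 2 ^ (e - 1) := by
        rw [← two_mul, ← pow_succ']; congr 1; omega
      rw [Podd, h2e, Finset.prod_range_add, ← Podd]
      congr 1
      refine Finset.prod_congr rfl fun k _ => ?_
      omega
    have he1 : 1 ≤ e := by omega
    have hcard : ((Finset.range (2 ^ (e - 1))).card : ZMod (2 ^ (e + 1)))
        * ((2 ^ e : ℕ) : ZMod (2 ^ (e + 1))) = 0 := by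
      rw [Finset.card_range]
      have h : (2 ^ (e - 1) * 2 ^ e : ℕ) = 2 ^ (e + 1) * 2 ^ (e - 2) := by
        rw [← pow_add, ← pow_add]; congr 1; omega
      calc ((2 ^ (e - 1) : ℕ) : ZMod (2 ^ (e + 1))) * ((2 ^ e : ℕ) : ZMod (2 ^ (e + 1)))
          = ((2 ^ (e - 1) * 2 ^ e : ℕ) : ZMod (2 ^ (e + 1))) := by push_cast; ring
        _ = ((2 ^ (e + 1) * 2 ^ (e - 2) : ℕ) : ZMod (2 ^ (e + 1))) := by rw [h]
        _ = 0 := by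
            push_cast
            linear_combination ((2 : ZMod (2 ^ (e + 1))) ^ (e - 2)) * two_pow_zero e
    have hz : ((Podd (2 ^ e) : ℕ) : ZMod (2 ^ (e + 1)))
        = ((Podd (2 ^ (e - 1)) * Podd (2 ^ (e - 1)) : ℕ) : ZMod (2 ^ (e + 1))) := by
      rw [hsplit, Nat.cast_mul, prod_shift_zmod e he1, hcard, add_zero, Nat.cast_mul]
      rfl
    have hsq : Podd (2 ^ (e - 1)) * Podd (2 ^ (e - 1)) ≡ 1 [MOD 2 ^ (e + 1)] := by
      rw [Nat.modEq_iff_dvd]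
      have hd : (2 ^ e : ℤ) ∣ (Podd (2 ^ (e - 1)) : ℤ) - 1 := by
        have := Nat.modEq_iff_dvd.mp ih
        exact dvd_sub_comm.mp (by push_cast at this ⊢; exact this)
      have hd2 : (2 : ℤ) ∣ (Podd (2 ^ (e - 1)) : ℤ) + 1 := by
        obtain ⟨a, ha⟩ := Podd_odd (2 ^ (e - 1))
        exact ⟨a + 1, by rw [ha]; push_cast; ring⟩
      push_cast [pow_succ]
      have hq : (1 : ℤ) - (Podd (2 ^ (e - 1)) : ℤ) * (Podd (2 ^ (e - 1)) : ℤ)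
          = -(((Podd (2 ^ (e - 1)) : ℤ) - 1) * ((Podd (2 ^ (e - 1)) : ℤ) + 1)) := by ring
      rw [hq, dvd_neg]
      exact mul_dvd_mul hd hd2
    have hfin : ((Podd (2 ^ e) : ℕ) : ZMod (2 ^ (e + 1))) = ((1 : ℕ) : ZMod (2 ^ (e + 1))) := by
      rw [hz, (ZMod.natCast_eq_natCast_iff _ _ _).mpr hsq]
    have h := (ZMod.natCast_eq_natCast_iff _ _ _).mp hfin
    simpa using h

theorem odd_part_factorial_mod (e : ℕ) (he : 3 ≤ e) :
    ordCompl[2] (Nat.factorial (2 ^ (e - 1)))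
      ≡ ordCompl[2] (Nat.factorial (2 ^ e)) [MOD 2 ^ e] := by
  have h2e : 2 ^ e = 2 * 2 ^ (e - 1) := by
    rw [← pow_succ']; congr 1; omega
  rw [h2e, fact_split, Nat.ordCompl_mul, Nat.ordCompl_mul]
  have h1 : ordCompl[2] (2 ^ 2 ^ (e - 1)) = 1 := by
    have : (2 ^ 2 ^ (e - 1) : ℕ).factorization 2 = 2 ^ (e - 1) := by
      simp [Nat.Prime.factorization_pow Nat.prime_two]
    rw [this, Nat.div_self (Nat.pow_pos (by norm_num))]
  have h2 : ordCompl[2] (Podd (2 ^ (e - 1))) = Podd (2 ^ (e - 1)) := by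
    have : (Podd (2 ^ (e - 1))).factorization 2 = 0 := by
      apply Nat.factorization_eq_zero_of_not_dvd
      have := Nat.odd_iff.mp (Podd_odd (2 ^ (e - 1)))
      omega
    rw [this, pow_zero, Nat.div_one]
  rw [h1, h2, one_mul, ← h2e]
  have hk := key e he
  calc ordCompl[2] (Nat.factorial (2 ^ (e - 1)))
      = ordCompl[2] (Nat.factorial (2 ^ (e - 1))) * 1 := (mul_one _).symm
    _ ≡ ordCompl[2] (Nat.factorial (2 ^ (e - 1))) * Podd (2 ^ (e - 1)) [MOD 2 ^ e] :=
        Nat.ModEq.mul_left _ hk.symm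
end

section
/- For every e ≥ 1, od(2^e!) = ∏_{m=2}^{e} h(m)^{e+1-m}, where h(m) is the product of all odd integers j with 2^{m-1}+1 ≤ j ≤ 2^m - 1. -/
def h (m : ℕ) : ℕ := ∏ j ∈ (Finset.Ioo (2 ^ (m - 1)) (2 ^ m)).filter (fun j => Odd j), j

lemma fact2 (n : ℕ) : (2 * n).factorial
    = 2 ^ n * n.factorial * ∏ j ∈ (Finset.range (2 * n)).filter (fun j => Odd j), j := by
  induction n with
  | zero => simp
  | succ n ih =>
    have hfilter : (Finset.range (2 * (n + 1))).filter (fun j => Odd j)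
        = insert (2 * n + 1) ((Finset.range (2 * n)).filter (fun j => Odd j)) := by
      ext j
      simp only [Finset.mem_filter, Finset.mem_range, Finset.mem_insert, Nat.odd_iff]
      omega
    have hnot : (2 * n + 1) ∉ (Finset.range (2 * n)).filter (fun j => Odd j) := by
      simp [Finset.mem_range]
    rw [hfilter, Finset.prod_insert hnot]
    have h1 : 2 * (n + 1) = (2 * n + 1) + 1 := by ring
    rw [h1, Nat.factorial_succ, Nat.factorial_succ, ih, Nat.factorial_succ]
    ring

lemma Oeq : ∀ m : ℕ, 1 ≤ m →
    ∏ j ∈ (Finset.range (2 ^ m)).filter (fun j => Odd j), j = ∏ k ∈ Finset.Icc 2 m, h k := by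
  intro m hm
  induction m with
  | zero => omega
  | succ m ih =>
    rcases Nat.eq_or_lt_of_le hm with h1 | h1
    · rw [← h1]; decide
    · have hm1 : 1 ≤ m := by omega
      obtain ⟨k, hk⟩ : 2 ∣ 2 ^ m := dvd_pow_self 2 (by omega)
      have hpow : (2 : ℕ) ^ (m + 1) = 2 * 2 ^ m := by ring
      have hsplit : (Finset.range (2 ^ (m + 1))).filter (fun j => Odd j)
          = (Finset.range (2 ^ m)).filter (fun j => Odd j)
            ∪ (Finset.Ioo (2 ^ m) (2 ^ (m + 1))).filter (fun j => Odd j) := by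
        ext j
        simp only [Finset.mem_filter, Finset.mem_range, Finset.mem_union, Finset.mem_Ioo,
          Nat.odd_iff]
        omega
      have hdisj : Disjoint ((Finset.range (2 ^ m)).filter (fun j => Odd j))
          ((Finset.Ioo (2 ^ m) (2 ^ (m + 1))).filter (fun j => Odd j)) := by
        simp only [Finset.disjoint_left, Finset.mem_filter, Finset.mem_range, Finset.mem_Ioo]
        intro a ha hb
        omega
      rw [hsplit, Finset.prod_union hdisj, ih hm1,
        Finset.prod_Icc_succ_top (by omega : 2 ≤ m + 1)]
      congr 1

theorem odd_part_factorial_prod (e : ℕ) (he : 1 ≤ e) :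
    ordCompl[2] (Nat.factorial (2 ^ e)) = ∏ m ∈ Finset.Icc 2 e, (h m) ^ (e + 1 - m) := by
  induction e, he using Nat.le_induction with
  | base =>
    have : (2 ^ 1).factorial = 2 := by decide
    rw [this]
    have h2 : (Nat.factorization 2) 2 = 1 := Nat.Prime.factorization_self Nat.prime_two
    rw [h2]
    simp
  | succ e he ih =>
    have hpow : (2 : ℕ) ^ (e + 1) = 2 * 2 ^ e := by ring
    rw [hpow, fact2, Nat.ordCompl_mul, Nat.ordCompl_mul, ← hpow]
    have hP : Odd (∏ j ∈ (Finset.range (2 ^ (e + 1))).filter (fun j => Odd j), j) := by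
      refine Finset.prod_induction _ Odd (fun _ _ => Odd.mul) odd_one ?_
      intro x hx
      exact (Finset.mem_filter.1 hx).2
    have hPc : ordCompl[2] (∏ j ∈ (Finset.range (2 ^ (e + 1))).filter (fun j => Odd j), j)
        = ∏ j ∈ (Finset.range (2 ^ (e + 1))).filter (fun j => Odd j), j := by
      rw [Nat.factorization_eq_zero_of_not_dvd (by
        rw [Nat.two_dvd_ne_zero, Nat.odd_iff.1 hP])]
      simp
    have h2p : ordCompl[2] (2 ^ 2 ^ e) = 1 := by
      rw [Nat.Prime.factorization_pow Nat.prime_two]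
      simp
    rw [hPc, h2p, ih, Oeq (e + 1) (by omega), one_mul]
    rw [Finset.prod_Icc_succ_top (by omega : 2 ≤ e + 1),
      Finset.prod_Icc_succ_top (by omega : 2 ≤ e + 1)]
    have hstep : ∀ m ∈ Finset.Icc 2 e, h m ^ (e + 1 + 1 - m) = h m ^ (e + 1 - m) * h m := by
      intro m hm
      rw [Finset.mem_Icc] at hm
      rw [← pow_succ]
      congr 1
      omega
    rw [Finset.prod_congr rfl hstep, Finset.prod_mul_distrib]
    simp
    ring
end

section
/- For e ≥ 2, the quantity σ̂_1(S_e) = ∑_{j ∈ S_e} ∏_{i ∈ S_e, i ≠ j} i is divisible by 2^e. -/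
theorem sigma_hat_one_div (e : ℕ) (he : 2 ≤ e) :
    (2 ^ e : ℕ) ∣ ∑ j ∈ (Finset.range (2 ^ e)).filter (fun j => Odd j),
      ∏ i ∈ ((Finset.range (2 ^ e)).filter (fun j => Odd j)).erase j, i := by
  set S := (Finset.range (2 ^ e)).filter (fun j => Odd j) with hS
  rw [← ZMod.natCast_eq_zero_iff]
  push_cast
  have h2 : 2 ^ e = 2 * 2 ^ (e - 1) := by
    rw [← pow_succ']; congr 1; omega
  have hmem : ∀ a ∈ S, Odd a ∧ a < 2 ^ e := by
    intro a ha
    rw [hS, Finset.mem_filter, Finset.mem_range] at ha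
    exact ⟨ha.2, ha.1⟩
  have hmem' : ∀ a, Odd a → a < 2 ^ e → a ∈ S := by
    intro a h1 h2
    rw [hS, Finset.mem_filter, Finset.mem_range]
    exact ⟨h2, h1⟩
  have hBmem : ∀ a ∈ S, 2 ^ e - a ∈ S := by
    intro a ha
    obtain ⟨⟨k, hk⟩, hlt⟩ := hmem a ha
    exact hmem' _ ⟨2 ^ (e - 1) - k - 1, by omega⟩ (by omega)
  have hunit : ∀ a ∈ S, IsUnit ((a : ℕ) : ZMod (2 ^ e)) := by
    intro a ha
    rw [ZMod.isUnit_iff_coprime]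
    exact Nat.Coprime.pow_right _ ((hmem a ha).1.coprime_two_right)
  apply Finset.sum_involution (fun a _ => 2 ^ e - a)
  · -- cancellation
    intro a ha
    obtain ⟨hodd, hlt⟩ := hmem a ha
    set b := 2 ^ e - a with hb
    have hbS : b ∈ S := hBmem a ha
    have hcast : ((b : ℕ) : ZMod (2 ^ e)) = -((a : ℕ) : ZMod (2 ^ e)) := by
      have : ((b : ℕ) : ZMod (2 ^ e)) + ((a : ℕ) : ZMod (2 ^ e)) = ((2 ^ e : ℕ) : ZMod (2 ^ e)) := by
        rw [← Nat.cast_add]; congr 1; omega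
      rw [ZMod.natCast_self] at this
      linear_combination this
    -- multiply both sides by the unit a
    refine (hunit a ha).mul_left_cancel ?_
    rw [mul_add, mul_zero]
    have hA : ((a : ℕ) : ZMod (2 ^ e)) * ∏ i ∈ S.erase a, ((i : ℕ) : ZMod (2 ^ e))
        = ∏ i ∈ S, ((i : ℕ) : ZMod (2 ^ e)) := Finset.mul_prod_erase _ _ ha
    have hBeq : ((a : ℕ) : ZMod (2 ^ e)) * ∏ i ∈ S.erase b, ((i : ℕ) : ZMod (2 ^ e))
        = - ∏ i ∈ S, ((i : ℕ) : ZMod (2 ^ e)) := by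
      have hB : ((b : ℕ) : ZMod (2 ^ e)) * ∏ i ∈ S.erase b, ((i : ℕ) : ZMod (2 ^ e))
          = ∏ i ∈ S, ((i : ℕ) : ZMod (2 ^ e)) := Finset.mul_prod_erase _ _ hbS
      rw [hcast] at hB
      linear_combination -hB
    rw [hA, hBeq, add_neg_cancel]
  · intro a ha _
    obtain ⟨⟨k, hk⟩, hlt⟩ := hmem a ha
    have h3 : 2 ^ (e - 1) = 2 * 2 ^ (e - 2) := by
      rw [← pow_succ']; congr 1; omega
    intro hcontra
    omega
  · intro a ha
    have := (hmem a ha).2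
    omega
  · intro a ha; exact hBmem a ha
end

section
/- For e ≥ 3 and any integer A, ∏_{i ∈ S_e} (A·2^e + i) ≡ ∏_{i ∈ S_e} i modulo 2^{3e-1}. -/
open Finset

lemma reflect_prod (e : ℕ) (he : 3 ≤ e) (f : ℕ → ℤ) :
    ∏ i ∈ (Finset.range (2 ^ e)).filter (fun j => Odd j), f i =
    ∏ i ∈ (Finset.range (2 ^ (e-1))).filter (fun j => Odd j), (f i * f (2 ^ e - i)) := by
  obtain ⟨Q, hQ⟩ : ∃ Q, 2 ^ (e-1) = 2 * Q := ⟨2 ^ (e-2), by rw [← pow_succ']; congr 1; omega⟩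
  have h2e : 2 ^ e = 2 * 2 ^ (e-1) := by rw [← pow_succ']; congr 1; omega
  have hsplit : (Finset.range (2 ^ e)).filter (fun j => Odd j)
      = (Finset.range (2 ^ (e-1))).filter (fun j => Odd j)
        ∪ ((Finset.range (2 ^ (e-1))).filter (fun j => Odd j)).image (fun i => 2 ^ e - i) := by
    ext a
    simp only [mem_filter, mem_range, mem_union, mem_image, Nat.odd_iff]
    constructor
    · rintro ⟨ha, hodd⟩
      by_cases h : a < 2 ^ (e-1)
      · exact Or.inl ⟨h, hodd⟩
      · exact Or.inr ⟨2 ^ e - a, ⟨by omega, by omega⟩, by omega⟩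
    · rintro (⟨h1, h2⟩ | ⟨i, ⟨h1, h2⟩, rfl⟩) <;> omega
  have hdisj : Disjoint ((Finset.range (2 ^ (e-1))).filter (fun j => Odd j))
      (((Finset.range (2 ^ (e-1))).filter (fun j => Odd j)).image (fun i => 2 ^ e - i)) := by
    rw [Finset.disjoint_left]
    rintro a ha hb
    simp only [mem_filter, mem_range, mem_image, Nat.odd_iff] at ha hb
    obtain ⟨i, ⟨h1, h2⟩, rfl⟩ := hb
    omega
  rw [hsplit, Finset.prod_union hdisj, Finset.prod_image, ← Finset.prod_mul_distrib]
  rintro i hi j hj h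
  simp only [mem_coe, mem_filter, mem_range] at hi hj h
  omega

lemma sq_sum : ∀ k : ℕ, 1 ≤ k → 2 ^ (k-1) ∣ ∑ j ∈ (Finset.range (2 ^ k)).filter (fun j => Odd j), j ^ 2 := by
  intro k
  induction k with
  | zero => omega
  | succ k ih =>
    intro _
    by_cases hk : 1 ≤ k
    case neg =>
      interval_cases k
      · decide
    have h2e : 2 ^ (k+1) = 2 * 2 ^ k := by ring
    obtain ⟨Q, hQ⟩ : ∃ Q, 2 ^ k = 2 * Q := ⟨2 ^ (k-1), by rw [← pow_succ']; congr 1; omega⟩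
    have hsplit : (Finset.range (2 ^ (k+1))).filter (fun j => Odd j)
        = (Finset.range (2 ^ k)).filter (fun j => Odd j)
          ∪ ((Finset.range (2 ^ k)).filter (fun j => Odd j)).image (fun i => i + 2 ^ k) := by
      ext a
      simp only [mem_filter, mem_range, mem_union, mem_image, Nat.odd_iff]
      constructor
      · rintro ⟨ha, hodd⟩
        by_cases h : a < 2 ^ k
        · exact Or.inl ⟨h, hodd⟩
        · exact Or.inr ⟨a - 2 ^ k, ⟨by omega, by omega⟩, by omega⟩
      · rintro (⟨h1, h2⟩ | ⟨i, ⟨h1, h2⟩, rfl⟩) <;> omega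
    have hdisj : Disjoint ((Finset.range (2 ^ k)).filter (fun j => Odd j))
        (((Finset.range (2 ^ k)).filter (fun j => Odd j)).image (fun i => i + 2 ^ k)) := by
      rw [Finset.disjoint_left]
      rintro a ha hb
      simp only [mem_filter, mem_range, mem_image, Nat.odd_iff] at ha hb
      obtain ⟨i, ⟨h1, h2⟩, rfl⟩ := hb
      omega
    rw [hsplit, Finset.sum_union hdisj, Finset.sum_image (by intro i hi j hj h; simp only at h; omega)]
    have hexp : ∀ i : ℕ, (i + 2 ^ k) ^ 2 = i ^ 2 + (2 ^ (k+1) * i + 2 ^ k * 2 ^ k) := by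
      intro i; ring
    rw [Finset.sum_congr rfl (fun i _ => hexp i), Finset.sum_add_distrib]
    obtain ⟨T, hT⟩ := ih hk
    rw [hT]
    have h1 : (2:ℕ) ^ k ∣ 2 ^ (k-1) * T + 2 ^ (k-1) * T := by
      have : 2 ^ (k-1) * T + 2 ^ (k-1) * T = 2 ^ k * T := by
        rw [← two_mul, ← mul_assoc, ← pow_succ']; congr 2; omega
      rw [this]; exact Dvd.intro _ rfl
    have hrest : 2 ^ k ∣ ∑ i ∈ (Finset.range (2 ^ k)).filter (fun j => Odd j), (2 ^ (k+1) * i + 2 ^ k * 2 ^ k) :=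
      Finset.dvd_sum (fun i _ => dvd_add ((pow_dvd_pow 2 (Nat.le_succ k)).mul_right i) (dvd_mul_right _ _))
    obtain ⟨R, hR⟩ := hrest
    rw [hR]
    have hkk : (2:ℕ) ^ k = 2 ^ (k-1) + 2 ^ (k-1) := by
      have : k = (k-1) + 1 := by omega
      nth_rewrite 1 [this]
      rw [pow_succ]; ring
    show 2 ^ (k + 1 - 1) ∣ _
    rw [Nat.add_sub_cancel]
    exact ⟨T + R, by rw [hkk]; ring⟩


lemma prod_lin (ν y : ℤ) (hy2 : ν ∣ y ^ 2) (C d : ℕ → ℤ) :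
    ∀ s : Finset ℕ, (∀ i ∈ s, C i * d i ≡ 1 [ZMOD ν]) →
      (∏ i ∈ s, (y + C i)) ≡ (∏ i ∈ s, C i) * (1 + y * ∑ i ∈ s, d i) [ZMOD ν] := by
  intro s
  induction s using Finset.induction_on with
  | empty => simp
  | @insert a s ha ih =>
    intro h
    rw [Finset.prod_insert ha, Finset.prod_insert ha, Finset.sum_insert ha]
    have IH := ih (fun i hi => h i (Finset.mem_insert_of_mem hi))
    refine (IH.mul_left (y + C a)).trans ?_
    rw [Int.modEq_comm, Int.modEq_iff_dvd]
    obtain ⟨k, hk⟩ := (Int.modEq_iff_dvd.mp (h a (Finset.mem_insert_self a s)))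
    obtain ⟨l, hl⟩ := hy2
    exact ⟨(∏ i ∈ s, C i) * (y * k + (∑ i ∈ s, d i) * l), by
      linear_combination ((∏ i ∈ s, C i) * y) * hk + ((∏ i ∈ s, C i) * (∑ i ∈ s, d i)) * hl⟩


lemma dsum (e : ℕ) (he : 3 ≤ e) (d : ℕ → ℤ)
    (hd : ∀ i ∈ (Finset.range (2 ^ (e-1))).filter (fun j => Odd j),
      ((i : ℤ) * (2 ^ e - (i : ℤ))) * d i ≡ 1 [ZMOD (2:ℤ) ^ (3 * e - 1)]) :
    (2:ℤ) ^ (e-2) ∣ ∑ i ∈ (Finset.range (2 ^ (e-1))).filter (fun j => Odd j), d i := by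
  haveI h1 : NeZero (2 ^ (e-1)) := ⟨pow_ne_zero _ two_ne_zero⟩
  haveI h2 : NeZero (2 ^ (e-2)) := ⟨pow_ne_zero _ two_ne_zero⟩
  set s : Finset ℕ := (Finset.range (2 ^ (e-1))).filter (fun j => Odd j) with hs
  -- the inverse map mod 2^(e-1)
  set φ : ℕ → ℕ := fun i => ((i : ZMod (2 ^ (e-1)))⁻¹).val with hφ
  have hunit : ∀ i ∈ s, IsUnit ((i : ℕ) : ZMod (2 ^ (e-1))) := by
    intro i hi
    simp only [hs, mem_filter, mem_range] at hi
    exact (ZMod.isUnit_iff_coprime i _).mpr (Nat.Coprime.pow_right _ hi.2.coprime_two_right)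
  have hmodeq : ∀ i ∈ s, i * φ i ≡ 1 [MOD 2 ^ (e-1)] := by
    intro i hi
    have : ((i * φ i : ℕ) : ZMod (2 ^ (e-1))) = ((1 : ℕ) : ZMod (2 ^ (e-1))) := by
      push_cast [hφ, ZMod.natCast_val, ZMod.cast_id]
      exact ZMod.mul_inv_of_unit _ (hunit i hi)
    exact (ZMod.natCast_eq_natCast_iff _ _ _).mp this
  have hφmem : ∀ i ∈ s, φ i ∈ s := by
    intro i hi
    have hlt : φ i < 2 ^ (e-1) := ZMod.val_lt _
    have hodd : Odd (φ i) := by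
      have h2' := Nat.ModEq.of_dvd (dvd_pow_self 2 (by omega)) (hmodeq i hi)
      have : (i * φ i) % 2 = 1 % 2 := h2'
      rw [Nat.odd_iff]
      rcases Nat.even_or_odd (φ i) with hev | hodd
      · exfalso
        obtain ⟨u, hu⟩ : 2 ∣ i * φ i := Dvd.dvd.mul_left hev.two_dvd i
        omega
      · exact Nat.odd_iff.mp hodd
    simp only [hs, mem_filter, mem_range]
    exact ⟨hlt, hodd⟩
  have hφφ : ∀ i ∈ s, φ (φ i) = i := by
    intro i hi
    have hilt : i < 2 ^ (e-1) := by simp only [hs, mem_filter, mem_range] at hi; exact hi.1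
    have hcast : ((φ i : ℕ) : ZMod (2 ^ (e-1))) = ((i : ℕ) : ZMod (2 ^ (e-1)))⁻¹ := by
      simp [hφ, ZMod.natCast_val, ZMod.cast_id]
    have hinvinv : (((i : ℕ) : ZMod (2 ^ (e-1)))⁻¹)⁻¹ = ((i : ℕ) : ZMod (2 ^ (e-1))) := by
      have hmi := ZMod.mul_inv_of_unit _ (hunit i hi)
      have hu' : IsUnit ((i : ℕ) : ZMod (2 ^ (e-1)))⁻¹ :=
        IsUnit.of_mul_eq_one _ (ZMod.inv_mul_of_unit _ (hunit i hi))
      have hmi' := ZMod.mul_inv_of_unit _ hu'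
      calc (((i:ℕ) : ZMod (2 ^ (e-1)))⁻¹)⁻¹
          = (((i:ℕ) : ZMod (2 ^ (e-1))) * ((i:ℕ) : ZMod (2 ^ (e-1)))⁻¹) * (((i:ℕ) : ZMod (2 ^ (e-1)))⁻¹)⁻¹ := by
            rw [hmi, one_mul]
        _ = ((i:ℕ) : ZMod (2 ^ (e-1))) := by rw [mul_assoc, hmi', mul_one]
    simp only [hφ]
    rw [hcast, hinvinv, ZMod.val_cast_of_lt hilt]
  -- now work in R = ZMod (2^(e-2))
  have key : ∀ i ∈ s, ((d i : ZMod (2 ^ (e-2))) : ZMod (2 ^ (e-2))) = -((φ i : ZMod (2 ^ (e-2))))^2 := by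
    intro i hi
    have hA : (d i : ZMod (2 ^ (e-2))) * (-((i : ZMod (2 ^ (e-2))))^2) = 1 := by
      have hdvd : ((2 ^ (e-2) : ℕ) : ℤ) ∣ (2:ℤ) ^ (3 * e - 1) := by
        push_cast; exact pow_dvd_pow 2 (by omega)
      have := (hd i hi).of_dvd hdvd
      have hcast := (ZMod.intCast_eq_intCast_iff _ _ _).mpr this
      push_cast at hcast
      have h2e : ((2 : ZMod (2 ^ (e-2))))^e = 0 := by
        have : e = (e-2) + 2 := by omega
        rw [this, pow_add]
        have : ((2 : ZMod (2 ^ (e-2))))^(e-2) = 0 := by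
          have := ZMod.natCast_self (2 ^ (e-2))
          push_cast at this
          exact this
        rw [this, zero_mul]
      rw [h2e] at hcast
      rw [← hcast]; ring
    have hmul : ((i : ZMod (2 ^ (e-2)))) * ((φ i : ZMod (2 ^ (e-2)))) = 1 := by
      have := Nat.ModEq.of_dvd (pow_dvd_pow 2 (by omega : e-2 ≤ e-1)) (hmodeq i hi)
      have hcast := (ZMod.natCast_eq_natCast_iff _ _ _).mpr this
      push_cast at hcast
      exact hcast
    have hB : (-((φ i : ZMod (2 ^ (e-2))))^2) * (-((i : ZMod (2 ^ (e-2))))^2) = 1 := by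
      have : (-((φ i : ZMod (2 ^ (e-2))))^2) * (-((i : ZMod (2 ^ (e-2))))^2)
          = (((i : ZMod (2 ^ (e-2)))) * ((φ i : ZMod (2 ^ (e-2)))))^2 := by ring
      rw [this, hmul, one_pow]
    calc (d i : ZMod (2 ^ (e-2)))
        = (d i : ZMod (2 ^ (e-2))) * ((-((φ i : ZMod (2 ^ (e-2))))^2) * (-((i : ZMod (2 ^ (e-2))))^2)) := by
          rw [hB, mul_one]
      _ = (-((φ i : ZMod (2 ^ (e-2))))^2) * ((d i : ZMod (2 ^ (e-2))) * (-((i : ZMod (2 ^ (e-2))))^2)) := by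
          ring
      _ = -((φ i : ZMod (2 ^ (e-2))))^2 := by rw [hA, mul_one]
  have hsum0 : ((∑ i ∈ s, d i : ℤ) : ZMod (2 ^ (e-2))) = 0 := by
    push_cast
    rw [Finset.sum_congr rfl key]
    have hreindex : ∑ i ∈ s, ((φ i : ZMod (2 ^ (e-2))))^2 = ∑ j ∈ s, ((j : ZMod (2 ^ (e-2))))^2 :=
      Finset.sum_nbij' φ φ hφmem hφmem hφφ hφφ (fun a _ => rfl)
    have hT : (2:ℕ)^(e-2) ∣ ∑ j ∈ s, j^2 := by
      have h0 := sq_sum (e-1) (by omega)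
      have h12 : e - 1 - 1 = e - 2 := by omega
      rwa [h12] at h0
    have hcast0 : ((∑ j ∈ s, j^2 : ℕ) : ZMod (2^(e-2))) = 0 :=
      (ZMod.natCast_eq_zero_iff _ _).mpr hT
    have hneg : ∑ i ∈ s, -((φ i : ZMod (2 ^ (e-2))))^2 = -∑ i ∈ s, ((φ i : ZMod (2 ^ (e-2))))^2 := by
      rw [Finset.sum_neg_distrib]
    rw [hneg, hreindex, neg_eq_zero]
    push_cast at hcast0
    exact hcast0
  have := (ZMod.intCast_zmod_eq_zero_iff_dvd _ _).mp hsum0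
  push_cast at this
  exact this

theorem prod_shift_strong (e : ℕ) (he : 3 ≤ e) (A : ℤ) :
    (∏ i ∈ (Finset.range (2 ^ e)).filter (fun j => Odd j), (A * 2 ^ e + (i : ℤ)))
      ≡ (∏ i ∈ (Finset.range (2 ^ e)).filter (fun j => Odd j), (i : ℤ))
      [ZMOD 2 ^ (3 * e - 1)] := by
  set ν : ℤ := 2 ^ (3 * e - 1) with hν
  set s : Finset ℕ := (Finset.range (2 ^ (e-1))).filter (fun j => Odd j) with hs
  set x : ℤ := A * 2 ^ e with hx
  set C : ℕ → ℤ := fun i => (i : ℤ) * (2 ^ e - (i : ℤ)) with hC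
  set y : ℤ := (A ^ 2 + A) * ((2:ℤ) ^ e) ^ 2 with hy
  have hcast : ∀ i ∈ s, ((2 ^ e - i : ℕ) : ℤ) = 2 ^ e - (i : ℤ) := by
    intro i hi
    simp only [hs, mem_filter, mem_range] at hi
    have : i ≤ 2 ^ e := le_of_lt (lt_of_lt_of_le hi.1 (pow_le_pow_right₀ one_le_two (by omega)))
    push_cast [Nat.cast_sub this]
    ring
  have hLHS : ∏ i ∈ (Finset.range (2 ^ e)).filter (fun j => Odd j), (A * 2 ^ e + (i : ℤ))
      = ∏ i ∈ s, (y + C i) := by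
    rw [reflect_prod e he (fun t => A * 2 ^ e + (t : ℤ))]
    refine Finset.prod_congr rfl (fun i hi => ?_)
    rw [hcast i hi]
    simp only [hC, hy, hx]
    ring
  have hRHS : ∏ i ∈ (Finset.range (2 ^ e)).filter (fun j => Odd j), ((i : ℤ))
      = ∏ i ∈ s, C i := by
    rw [reflect_prod e he (fun t => (t : ℤ))]
    refine Finset.prod_congr rfl (fun i hi => ?_)
    rw [hcast i hi]
  rw [hLHS, hRHS]
  -- choose inverses
  have hexist : ∀ i : ℕ, ∃ di : ℤ, i ∈ s → C i * di ≡ 1 [ZMOD ν] := by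
    intro i
    by_cases hi : i ∈ s
    · have hodd : Odd (C i) := by
        simp only [hs, mem_filter, mem_range] at hi
        have h1 : Odd ((i : ℤ)) := by exact_mod_cast hi.2
        have h2 : Odd ((2:ℤ) ^ e - (i : ℤ)) := by
          refine Even.sub_odd ?_ h1
          rw [Int.even_pow]
          exact ⟨even_two, by omega⟩
        exact h1.mul h2
      have hcop : IsCoprime ν (C i) := by
        rw [hν]
        refine IsCoprime.pow_left ?_
        rw [Int.prime_two.coprime_iff_not_dvd, Int.two_dvd_ne_zero]
        rw [Int.odd_iff] at hodd; omega
      obtain ⟨u, v, huv⟩ := hcop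
      exact ⟨v, fun _ => (Int.modEq_iff_dvd.mpr ⟨u, by linarith⟩)⟩
    · exact ⟨0, fun h => absurd h hi⟩
  choose d hd using hexist
  have hy2 : ν ∣ y ^ 2 := by
    have h1 : ν ∣ (2:ℤ) ^ (4 * e) := by rw [hν]; exact pow_dvd_pow 2 (by omega)
    have h2 : y ^ 2 = (2:ℤ) ^ (4 * e) * (A ^ 2 + A) ^ 2 := by
      rw [hy, show 4 * e = e * 4 from by ring, pow_mul]
      ring
    rw [h2]
    exact h1.mul_right _
  have hmain := prod_lin ν y hy2 C d s (fun i hi => hd i hi)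
  refine hmain.trans ?_
  -- (∏ C i) * (1 + y * Σ d) ≡ ∏ C i
  have hdiv : ν ∣ y * ∑ i ∈ s, d i := by
    obtain ⟨D, hD⟩ := dsum e he d (fun i hi => by
      have := hd i hi
      simpa only [hC] using this)
    obtain ⟨B, hB⟩ := Int.even_mul_succ_self A
    have hAB : A ^ 2 + A = 2 * B := by rw [show A ^ 2 + A = A * (A + 1) from by ring, hB]; ring
    have hpow : (2:ℤ) * ((2:ℤ) ^ e) ^ 2 * 2 ^ (e-2) = ν := by
      rw [hν, show 3 * e - 1 = 1 + e * 2 + (e - 2) from by omega, pow_add, pow_add, pow_one,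
        pow_mul]
    refine ⟨B * D, ?_⟩
    rw [hy, hD, hAB, ← hpow]
    ring
  have hone : (1 : ℤ) + y * ∑ i ∈ s, d i ≡ 1 [ZMOD ν] := by
    rw [Int.modEq_iff_dvd]
    simpa using (dvd_neg.mpr hdiv)
  calc (∏ i ∈ s, C i) * (1 + y * ∑ i ∈ s, d i)
      ≡ (∏ i ∈ s, C i) * 1 [ZMOD ν] := hone.mul_left _
    _ = ∏ i ∈ s, C i := by rw [mul_one]
end

section
/- For e ≥ 3, any integers A and B, and any natural number j, (∏_{i ∈ S_e} (A·2^e + i))^{2^j} ≡ (∏_{i ∈ S_e} (B·2^e + i))^{2^j} modulo 2^{3e-1+j}. -/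
open Finset

lemma prod_add_expand (S : Finset ℕ) (c : ℕ → ℤ) (m t : ℤ) :
    ∃ K : ℤ, ∏ i ∈ S, (c i + m * t)
      = ∏ i ∈ S, c i + m * t * (∑ i ∈ S, ∏ k ∈ S.erase i, c k) + m ^ 2 * K := by
  classical
  induction S using Finset.induction_on with
  | empty => exact ⟨0, by simp⟩
  | @insert a S ha ih =>
    obtain ⟨K, hK⟩ := ih
    refine ⟨c a * K + t ^ 2 * (∑ i ∈ S, ∏ k ∈ S.erase i, c k) + m * t * K, ?_⟩
    have h1 : ∑ i ∈ insert a S, ∏ k ∈ (insert a S).erase i, c k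
        = ∏ k ∈ S, c k + c a * ∑ i ∈ S, ∏ k ∈ S.erase i, c k := by
      rw [Finset.sum_insert ha, Finset.erase_insert ha, Finset.mul_sum]
      congr 1
      refine Finset.sum_congr rfl fun i hi => ?_
      have hia : i ≠ a := fun h => ha (h ▸ hi)
      rw [Finset.erase_insert_of_ne hia.symm,
        Finset.prod_insert (fun h => ha (Finset.mem_of_mem_erase h))]
    rw [Finset.prod_insert ha, Finset.prod_insert ha, h1, hK]
    ring

lemma sq_sum_odd : ∀ m : ℕ, 1 ≤ m →
    (2 ^ (m - 1) : ℕ) ∣ ∑ j ∈ (range (2 ^ m)).filter (fun j => Odd j), j ^ 2 := by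
  intro m
  induction m with
  | zero => intro h; omega
  | succ m ih =>
    intro _
    rcases Nat.eq_or_lt_of_le (Nat.one_le_iff_ne_zero.mpr (Nat.succ_ne_zero m)) with h1 | h1
    · have : m = 0 := by omega
      subst this
      decide
    · have hm : 1 ≤ m := by omega
      set N := 2 ^ m with hN
      have h2 : 2 ^ (m - 1) * 2 = 2 ^ m := by
        rw [← pow_succ]; congr 1; omega
      have hNN : 2 ^ (m + 1) = N + N := by rw [pow_succ]; ring
      have hsplit : range (2 ^ (m + 1)) = range N ∪ (range N).image (fun x => N + x) := by
        ext x
        simp only [Finset.mem_range, Finset.mem_union, Finset.mem_image]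
        constructor
        · intro hx
          rcases lt_or_ge x N with h | h
          · exact Or.inl h
          · exact Or.inr ⟨x - N, by omega, by omega⟩
        · intro hx
          rcases hx with h | ⟨y, hy, rfl⟩ <;> omega
      have hNeven : Even N := ⟨2 ^ (m - 1), by omega⟩
      have hNodd : ¬ Odd N := by simp [Nat.not_odd_iff_even, hNeven]
      have himg : ((range N).image (fun x => N + x)).filter (fun j => Odd j)
          = ((range N).filter (fun j => Odd j)).image (fun x => N + x) := by
        rw [Finset.filter_image]
        congr 1
        ext x
        simp only [Finset.mem_filter, Finset.mem_range]
        have : Odd (N + x) ↔ Odd x := by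
          rw [Nat.odd_add']
          exact ⟨fun h => h.2 hNeven, fun h => ⟨fun _ => hNeven, fun _ => h⟩⟩
        rw [this]
      have hdisj : Disjoint ((range N).filter (fun j => Odd j))
          ((((range N).image (fun x => N + x))).filter (fun j => Odd j)) := by
        rw [Finset.disjoint_left]
        intro a ha hb
        simp only [Finset.mem_filter, Finset.mem_range, Finset.mem_image] at ha hb
        obtain ⟨⟨y, hy, rfl⟩, _⟩ := hb
        omega
      rw [hsplit, Finset.filter_union, Finset.sum_union hdisj, himg,
        Finset.sum_image (by intro a _ b _ h; simp only at h; omega)]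
      have hsum2 : ∑ j ∈ (range N).filter (fun j => Odd j), (N + j) ^ 2
          = ∑ j ∈ (range N).filter (fun j => Odd j), (j ^ 2 + (N * N + 2 * N * j)) := by
        refine Finset.sum_congr rfl fun j _ => by ring
      rw [hsum2, Finset.sum_add_distrib]
      obtain ⟨w, hw⟩ := ih hm
      have hd2 : ∃ v, ∑ j ∈ (range N).filter (fun j => Odd j), (N * N + 2 * N * j)
          = 2 ^ (m - 1) * 2 * v := by
        have : (2 ^ (m-1) * 2) ∣ ∑ j ∈ (range N).filter (fun j => Odd j), (N * N + 2 * N * j) := by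
          refine Finset.dvd_sum fun j _ => ?_
          have h2N : 2 ^ (m-1) * 2 ∣ N := ⟨1, by omega⟩
          exact Dvd.dvd.add (h2N.mul_right N) (h2N.trans ⟨2 * j, by ring⟩)
        exact this
      obtain ⟨v, hv⟩ := hd2
      refine ⟨w + v, ?_⟩
      have : (m + 1) - 1 = m := by omega
      rw [this, hw, hv, ← h2]
      ring

lemma key_dvd (e : ℕ) (he : 3 ≤ e) :
    (2 ^ (e - 2) : ℤ) ∣ ∑ i ∈ (range (2 ^ (e - 1))).filter (fun i => Odd i),
      ∏ k ∈ ((range (2 ^ (e - 1))).filter (fun i => Odd i)).erase i,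
        ((k : ℤ) * (2 ^ e - (k : ℤ))) := by
  classical
  set N := 2 ^ (e - 1) with hN
  haveI : NeZero N := ⟨by positivity⟩
  set S := (range N).filter (fun i => Odd i) with hS
  set R := ZMod (2 ^ (e - 2)) with hR
  -- reduce to vanishing in R
  suffices h : ((∑ i ∈ S, ∏ k ∈ S.erase i, ((k : ℤ) * (2 ^ e - (k : ℤ))) : ℤ) : R) = 0 by
    have h2 := (ZMod.intCast_zmod_eq_zero_iff_dvd _ _).mp h
    push_cast at h2
    exact h2
  show ((_ : ℤ) : ZMod (2 ^ (e - 2))) = 0; push_cast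
  -- 2^e = 0 in R
  have h2e : ((2 : R)) ^ e = 0 := by
    have : ((2 ^ e : ℕ) : R) = 0 :=
      (ZMod.natCast_eq_zero_iff _ _).mpr (pow_dvd_pow 2 (by omega))
    push_cast at this
    exact this
  have hfac : ∀ k : ℕ, (k : R) * ((2 : R) ^ e - (k : R)) = -1 * (k : R) ^ 2 := by
    intro k; rw [h2e]; ring
  simp only [hfac]
  simp only [Finset.prod_mul_distrib, Finset.prod_const]
  -- facts about members of S
  have hmemS : ∀ i, i ∈ S → Odd i ∧ i < N := by
    intro i hi
    simp only [hS, Finset.mem_filter, Finset.mem_range] at hi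
    exact ⟨hi.2, hi.1⟩
  have hunit : ∀ i, i ∈ S → IsUnit ((i : ℕ) : ZMod N) := by
    intro i hi
    exact (ZMod.isUnit_iff_coprime i N).mpr ((hmemS i hi).1.coprime_two_right.pow_right _)
  set φ : ℕ → ℕ := fun i => (((i : ℕ) : ZMod N)⁻¹).val with hφ
  have hmod : ∀ i, i ∈ S → i * φ i ≡ 1 [MOD N] := by
    intro i hi
    have hval : ((φ i : ℕ) : ZMod N) = ((i : ℕ) : ZMod N)⁻¹ :=
      ZMod.natCast_rightInverse _
    have := ZMod.mul_inv_of_unit _ (hunit i hi)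
    rw [← ZMod.natCast_eq_natCast_iff]
    push_cast
    rw [hval]
    exact this
  have hφS : ∀ i, i ∈ S → φ i ∈ S := by
    intro i hi
    have hlt : φ i < N := ZMod.val_lt _
    have h2N : 2 ∣ N := dvd_pow_self 2 (by omega)
    have hmod2 := (hmod i hi).of_dvd h2N
    have : (i * φ i) % 2 = 1 := by
      have := hmod2
      unfold Nat.ModEq at this
      omega
    have hoddprod : Odd (i * φ i) := Nat.odd_iff.mpr this
    have hodd : Odd (φ i) := (Nat.odd_mul.mp hoddprod).2
    simp only [hS, Finset.mem_filter, Finset.mem_range]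
    exact ⟨hlt, hodd⟩
  have hinvR : ∀ i, i ∈ S → ((i : ℕ) : R) * ((φ i : ℕ) : R) = 1 := by
    intro i hi
    have hd : (2 ^ (e - 2) : ℕ) ∣ N := by
      rw [hN]; exact pow_dvd_pow 2 (by omega)
    have := ((hmod i hi).of_dvd hd)
    have h1 := (ZMod.natCast_eq_natCast_iff _ _ _).mpr this
    push_cast at h1
    exact h1
  have hφφ : ∀ i, i ∈ S → φ (φ i) = i := by
    intro i hi
    have hval : ((φ i : ℕ) : ZMod N) = ((i : ℕ) : ZMod N)⁻¹ :=
      ZMod.natCast_rightInverse _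
    have ha := hunit i hi
    have hb : IsUnit (((i : ℕ) : ZMod N)⁻¹) :=
      IsUnit.of_mul_eq_one _ (ZMod.inv_mul_of_unit _ ha)
    have hinvinv : (((i : ℕ) : ZMod N)⁻¹)⁻¹ = ((i : ℕ) : ZMod N) := by
      refine hb.mul_right_cancel ?_
      rw [ZMod.inv_mul_of_unit _ hb, ZMod.mul_inv_of_unit _ ha]
    show ((((φ i : ℕ) : ZMod N))⁻¹).val = i
    rw [hval, hinvinv, ZMod.val_cast_of_lt (hmemS i hi).2]
  -- main computation
  set QQ : R := ∏ k ∈ S, ((k : ℕ) : R) ^ 2 with hQQ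
  have hT : ∀ i, i ∈ S → ∏ k ∈ S.erase i, ((k : ℕ) : R) ^ 2 = QQ * ((φ i : ℕ) : R) ^ 2 := by
    intro i hi
    have hQe : ((i : ℕ) : R) ^ 2 * ∏ k ∈ S.erase i, ((k : ℕ) : R) ^ 2 = QQ := by
      rw [hQQ]
      exact Finset.mul_prod_erase S (fun k => ((k : ℕ) : R) ^ 2) hi
    calc ∏ k ∈ S.erase i, ((k : ℕ) : R) ^ 2
        = (((i : ℕ) : R) * ((φ i : ℕ) : R)) ^ 2 * ∏ k ∈ S.erase i, ((k : ℕ) : R) ^ 2 := by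
          rw [hinvR i hi]; ring
      _ = QQ * ((φ i : ℕ) : R) ^ 2 := by rw [← hQe]; ring
  have hsum0 : ∑ j ∈ S, ((j : ℕ) : R) ^ 2 = 0 := by
    have hd := sq_sum_odd (e - 1) (by omega)
    have : ((∑ j ∈ S, j ^ 2 : ℕ) : R) = 0 := by
      rw [ZMod.natCast_eq_zero_iff]
      have : e - 1 - 1 = e - 2 := by omega
      rw [← this]
      exact hd
    push_cast at this
    exact_mod_cast this
  have hreindex : ∑ i ∈ S, ((φ i : ℕ) : R) ^ 2 = ∑ j ∈ S, ((j : ℕ) : R) ^ 2 := by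
    refine Finset.sum_bij' (fun a _ => φ a) (fun a _ => φ a)
      (fun a ha => hφS a ha) (fun a ha => hφS a ha)
      (fun a ha => hφφ a ha) (fun a ha => hφφ a ha) (fun a ha => rfl)
  calc ∑ i ∈ S, (-1 : R) ^ (S.erase i).card * ∏ k ∈ S.erase i, ((k : ℕ) : R) ^ 2
      = ∑ i ∈ S, (-1 : R) ^ (S.card - 1) * (QQ * ((φ i : ℕ) : R) ^ 2) := by
        refine Finset.sum_congr rfl fun i hi => ?_
        rw [Finset.card_erase_of_mem hi, hT i hi]
    _ = (-1 : R) ^ (S.card - 1) * QQ * ∑ i ∈ S, ((φ i : ℕ) : R) ^ 2 := by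
        rw [Finset.mul_sum]
        refine Finset.sum_congr rfl fun i hi => by ring
    _ = 0 := by rw [hreindex, hsum0, mul_zero]

lemma pair_split (e : ℕ) (he : 3 ≤ e) (x : ℤ) :
    ∏ i ∈ (range (2 ^ e)).filter (fun i => Odd i), (x + (i : ℤ))
      = ∏ i ∈ (range (2 ^ (e - 1))).filter (fun i => Odd i),
          ((x + (i : ℤ)) * (x + ((2 : ℤ) ^ e - (i : ℤ)))) := by
  classical
  have h2 : 2 ^ e = 2 ^ (e - 1) + 2 ^ (e - 1) := by
    rw [← Nat.two_pow_succ]; congr 1; omega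
  have h3 : 2 ^ (e - 1) = 2 ^ (e - 2) + 2 ^ (e - 2) := by
    rw [← Nat.two_pow_succ]; congr 1; omega
  have hsplit : (range (2 ^ e)).filter (fun i => Odd i)
      = ((range (2 ^ (e - 1))).filter (fun i => Odd i))
        ∪ ((range (2 ^ (e - 1))).filter (fun i => Odd i)).image (fun i => 2 ^ e - i) := by
    ext a
    simp only [Finset.mem_filter, Finset.mem_range, Finset.mem_union, Finset.mem_image,
      Nat.odd_iff]
    constructor
    · rintro ⟨h1, hodd⟩
      rcases lt_or_ge a (2 ^ (e - 1)) with h | h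
      · exact Or.inl ⟨h, hodd⟩
      · exact Or.inr ⟨2 ^ e - a, ⟨by omega, by omega⟩, by omega⟩
    · rintro (⟨h1, hodd⟩ | ⟨y, ⟨hy1, hy2⟩, rfl⟩) <;> constructor <;> omega
  have hdisj : Disjoint ((range (2 ^ (e - 1))).filter (fun i => Odd i))
      (((range (2 ^ (e - 1))).filter (fun i => Odd i)).image (fun i => 2 ^ e - i)) := by
    rw [Finset.disjoint_left]
    intro a ha hb
    simp only [Finset.mem_filter, Finset.mem_range, Finset.mem_image, Nat.odd_iff] at ha hb
    obtain ⟨y, ⟨hy1, hy2⟩, rfl⟩ := hb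
    omega
  have hinj : ∀ a ∈ (range (2 ^ (e - 1))).filter (fun i => Odd i),
      ∀ b ∈ (range (2 ^ (e - 1))).filter (fun i => Odd i),
        2 ^ e - a = 2 ^ e - b → a = b := by
    intro a ha b hb hab
    simp only [Finset.mem_filter, Finset.mem_range] at ha hb
    omega
  rw [hsplit, Finset.prod_union hdisj, Finset.prod_image hinj, ← Finset.prod_mul_distrib]
  refine Finset.prod_congr rfl fun i hi => ?_
  simp only [Finset.mem_filter, Finset.mem_range] at hi
  have hle : i ≤ 2 ^ e := by omega
  congr 1
  congr 1
  push_cast [Nat.cast_sub hle]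
  ring

lemma sq_step_s10 (n : ℕ) (hn : 1 ≤ n) (x y : ℤ) (h : x ≡ y [ZMOD 2 ^ n]) :
    x ^ 2 ≡ y ^ 2 [ZMOD 2 ^ (n + 1)] := by
  rw [Int.modEq_iff_dvd] at h ⊢
  obtain ⟨d, hd⟩ := h
  have hy : y = x + 2 ^ n * d := by linarith
  subst hy
  have hpow : (2 : ℤ) ^ (n + 1) * 2 ^ (n - 1) = 2 ^ n * 2 ^ n := by
    rw [← pow_add, ← pow_add]; congr 1; omega
  exact ⟨x * d + 2 ^ (n - 1) * d ^ 2, by linear_combination (-d ^ 2) * hpow⟩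

theorem prod_shift_pow (e : ℕ) (he : 3 ≤ e) (A B : ℤ) (j : ℕ) :
    (∏ i ∈ (Finset.range (2 ^ e)).filter (fun i => Odd i), (A * 2 ^ e + (i : ℤ))) ^ (2 ^ j)
      ≡ (∏ i ∈ (Finset.range (2 ^ e)).filter (fun i => Odd i), (B * 2 ^ e + (i : ℤ))) ^ (2 ^ j)
      [ZMOD 2 ^ (3 * e - 1 + j)] := by
  set S := (range (2 ^ (e - 1))).filter (fun i => Odd i) with hS
  set c : ℕ → ℤ := fun k => (k : ℤ) * (2 ^ e - (k : ℤ)) with hc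
  set E : ℤ := ∑ i ∈ S, ∏ k ∈ S.erase i, c k with hE
  have hbase : ∀ X : ℤ, ∃ t K : ℤ,
      ∏ i ∈ (range (2 ^ e)).filter (fun i => Odd i), (X * 2 ^ e + (i : ℤ))
        = ∏ i ∈ S, c i + 2 ^ (2 * e + 1) * t * E + (2 ^ (2 * e + 1) : ℤ) ^ 2 * K := by
    intro X
    obtain ⟨t, ht⟩ : ∃ t : ℤ, X * (X + 1) = 2 * t := by
      obtain ⟨r, hr⟩ := Int.even_mul_succ_self X
      exact ⟨r, by linarith⟩
    have h1 : ∀ i ∈ (range (2 ^ e)).filter (fun i => Odd i),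
        X * 2 ^ e + (i : ℤ) = (X * 2 ^ e) + (i : ℤ) := fun i _ => rfl
    have h2 := pair_split e he (X * 2 ^ e)
    have h3 : ∏ i ∈ S, ((X * 2 ^ e + (i : ℤ)) * (X * 2 ^ e + ((2 : ℤ) ^ e - (i : ℤ))))
        = ∏ i ∈ S, (c i + 2 ^ (2 * e + 1) * t) := by
      refine Finset.prod_congr rfl fun i _ => ?_
      rw [hc]
      linear_combination ((2 : ℤ) ^ e) ^ 2 * ht
    obtain ⟨K, hK⟩ := prod_add_expand S c (2 ^ (2 * e + 1)) t
    exact ⟨t, K, by rw [h2, h3, hK, hE]⟩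
  obtain ⟨tA, KA, hA⟩ := hbase A
  obtain ⟨tB, KB, hB⟩ := hbase B
  -- base congruence
  have hdvd : (2 ^ (3 * e - 1) : ℤ) ∣
      (∏ i ∈ (range (2 ^ e)).filter (fun i => Odd i), (B * 2 ^ e + (i : ℤ)))
        - ∏ i ∈ (range (2 ^ e)).filter (fun i => Odd i), (A * 2 ^ e + (i : ℤ)) := by
    rw [hA, hB]
    have hdiff : ∏ i ∈ S, c i + 2 ^ (2 * e + 1) * tB * E + (2 ^ (2 * e + 1) : ℤ) ^ 2 * KB
        - (∏ i ∈ S, c i + 2 ^ (2 * e + 1) * tA * E + (2 ^ (2 * e + 1) : ℤ) ^ 2 * KA)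
        = 2 ^ (2 * e + 1) * (tB - tA) * E + (2 ^ (2 * e + 1) : ℤ) ^ 2 * (KB - KA) := by
      ring
    rw [hdiff]
    obtain ⟨w, hw⟩ := key_dvd e he
    have hpow1 : (2 : ℤ) ^ (2 * e + 1) * 2 ^ (e - 2) = 2 ^ (3 * e - 1) := by
      rw [← pow_add]; congr 1; omega
    refine dvd_add ⟨(tB - tA) * w, ?_⟩ ?_
    · rw [hE] at *
      rw [hw, ← hpow1]
      ring
    · have : ((2 : ℤ) ^ (2 * e + 1)) ^ 2 = 2 ^ ((2 * e + 1) * 2) := by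
        rw [pow_mul]
      rw [this]
      exact (pow_dvd_pow 2 (by omega)).mul_right _
  have hmod : (∏ i ∈ (range (2 ^ e)).filter (fun i => Odd i), (A * 2 ^ e + (i : ℤ)))
      ≡ (∏ i ∈ (range (2 ^ e)).filter (fun i => Odd i), (B * 2 ^ e + (i : ℤ)))
      [ZMOD 2 ^ (3 * e - 1)] := (Int.modEq_iff_dvd).mpr hdvd
  -- lift through squarings
  induction j with
  | zero => simpa using hmod
  | succ j ih =>
    have h1 : 3 * e - 1 + (j + 1) = 3 * e - 1 + j + 1 := by omega
    have h2 : (2 : ℕ) ^ (j + 1) = 2 ^ j * 2 := by rw [pow_succ]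
    rw [h1, h2, pow_mul, pow_mul]
    exact sq_step_s10 (3 * e - 1 + j) (by omega) _ _ ih
end

section
/- For e ≥ 2, σ̂_1(S_e) ≡ 2^{2e-2} modulo 2^{2e-1}, where σ̂_1(S_e) = ∑_{j ∈ S_e} ∏_{i ∈ S_e, i ≠ j} i. -/
open Finset

lemma aux_filter_odd_reflect (N : ℕ) (hN : Even N) :
    (range (2 * N)).filter (fun j => Odd j)
      = (range N).filter (fun j => Odd j)
        ∪ ((range N).filter (fun j => Odd j)).image (fun j => 2 * N - j) := by
  obtain ⟨c, rfl⟩ := hN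
  ext j
  simp only [mem_union, mem_image, mem_filter, mem_range, Nat.odd_iff]
  constructor
  · rintro ⟨hj, hodd⟩
    by_cases h : j < c + c
    · exact Or.inl ⟨h, hodd⟩
    · exact Or.inr ⟨2 * (c + c) - j, ⟨by omega, by omega⟩, by omega⟩
  · rintro (⟨h1, h2⟩ | ⟨i, ⟨h1, h2⟩, rfl⟩) <;> omega

lemma aux_filter_odd_shift (N : ℕ) (hN : Even N) :
    (range (2 * N)).filter (fun j => Odd j)
      = (range N).filter (fun j => Odd j)
        ∪ ((range N).filter (fun j => Odd j)).image (fun j => j + N) := by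
  obtain ⟨c, rfl⟩ := hN
  ext j
  simp only [mem_union, mem_image, mem_filter, mem_range, Nat.odd_iff]
  constructor
  · rintro ⟨hj, hodd⟩
    by_cases h : j < c + c
    · exact Or.inl ⟨h, hodd⟩
    · exact Or.inr ⟨j - (c + c), ⟨by omega, by omega⟩, by omega⟩
  · rintro (⟨h1, h2⟩ | ⟨i, ⟨h1, h2⟩, rfl⟩) <;> omega

lemma aux_sum_split {M : Type*} [AddCommMonoid M] (s s₁ : Finset ℕ) (σ : ℕ → ℕ)
    (h : s = s₁ ∪ s₁.image σ) (hdisj : Disjoint s₁ (s₁.image σ))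
    (hinj : ∀ a ∈ s₁, ∀ b ∈ s₁, σ a = σ b → a = b) (g : ℕ → M) :
    ∑ j ∈ s, g j = ∑ j ∈ s₁, g j + ∑ j ∈ s₁, g (σ j) := by
  rw [h, Finset.sum_union hdisj, Finset.sum_image hinj]

/-- Sum of squares of odds below `2^m`. -/
lemma aux_sum_sq_odd (m : ℕ) (hm : 1 ≤ m) :
    (∑ j ∈ (range (2 ^ m)).filter (fun j => Odd j), j ^ 2) ≡ 2 ^ (m - 1) [MOD 2 ^ m] := by
  induction m with
  | zero => omega
  | succ m ih =>
    rcases Nat.lt_or_ge m 1 with h1 | h1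
    · interval_cases m
      decide
    · have ih' := ih h1
      have hEeven : Even ((2:ℕ) ^ m) := by
        refine (Nat.even_pow).mpr ⟨by decide, by omega⟩
      have hdec := aux_filter_odd_shift (2 ^ m) hEeven
      have hdisj : Disjoint ((range (2 ^ m)).filter (fun j => Odd j))
          (((range (2 ^ m)).filter (fun j => Odd j)).image (fun j => j + 2 ^ m)) := by
        simp only [disjoint_left, mem_image, mem_filter, mem_range]
        rintro a ⟨ha, _⟩ ⟨i, ⟨hi, _⟩, rfl⟩
        omega
      have hsplit := aux_sum_split _ _ _ hdec hdisj (by intro a _ b _; omega)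
        (fun j => j ^ 2)
      have hrange : (2 : ℕ) ^ (m + 1) = 2 * 2 ^ m := pow_succ' 2 m
      rw [hrange, hsplit, ← hrange]
      set S1 := ∑ j ∈ (range (2 ^ m)).filter (fun j => Odd j), j with hS1
      set S2 := ∑ j ∈ (range (2 ^ m)).filter (fun j => Odd j), j ^ 2 with hS2
      set C := ((range (2 ^ m)).filter (fun j => Odd j)).card with hC
      have hexp : ∑ j ∈ (range (2 ^ m)).filter (fun j => Odd j), (j + 2 ^ m) ^ 2
          = S2 + (2 ^ (m + 1) * S1 + C * 2 ^ (2 * m)) := by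
        have : ∀ j : ℕ, (j + 2 ^ m) ^ 2 = j ^ 2 + (2 ^ (m + 1) * j + 2 ^ (2 * m)) := by
          intro j
          have e1 : (2:ℕ) ^ (m + 1) = 2 * 2 ^ m := pow_succ' 2 m
          have e2 : (2:ℕ) ^ (2 * m) = 2 ^ m * 2 ^ m := by rw [two_mul, pow_add]
          rw [e1, e2]; ring
        rw [Finset.sum_congr rfl (fun j _ => this j), Finset.sum_add_distrib,
          Finset.sum_add_distrib, ← Finset.mul_sum, Finset.sum_const, smul_eq_mul]
      have hA : 2 * S2 ≡ 2 ^ m [MOD 2 ^ (m + 1)] := by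
        have h := Nat.ModEq.mul_left' (c := 2) ih'
        have e1 : (2:ℕ) * 2 ^ (m - 1) = 2 ^ m := by
          rw [← pow_succ']; congr 1; omega
        have e2 : (2:ℕ) * 2 ^ m = 2 ^ (m + 1) := (pow_succ' 2 m).symm
        rwa [e1, e2] at h
      have hB : 2 ^ (m + 1) * S1 ≡ 0 [MOD 2 ^ (m + 1)] :=
        Nat.modEq_zero_iff_dvd.mpr ⟨S1, rfl⟩
      have hCz : C * 2 ^ (2 * m) ≡ 0 [MOD 2 ^ (m + 1)] :=
        Nat.modEq_zero_iff_dvd.mpr (Dvd.dvd.mul_left (pow_dvd_pow 2 (by omega)) C)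
      calc S2 + ∑ j ∈ (range (2 ^ m)).filter (fun j => Odd j), (j + 2 ^ m) ^ 2
          = 2 * S2 + 2 ^ (m + 1) * S1 + C * 2 ^ (2 * m) := by rw [hexp]; ring
        _ ≡ 2 ^ m + 0 + 0 [MOD 2 ^ (m + 1)] := ((hA.add hB).add hCz)
        _ = 2 ^ ((m + 1) - 1) := by simp

lemma aux_sum_units (m : ℕ) (hm : 1 ≤ m) {M : Type*} [AddCommMonoid M]
    (g : ZMod (2 ^ m) → M) :
    ∑ j ∈ (range (2 ^ m)).filter (fun j => Odd j), g (j : ZMod (2 ^ m))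
      = ∑ u : (ZMod (2 ^ m))ˣ, g ((u : (ZMod (2 ^ m))ˣ) : ZMod (2 ^ m)) := by
  have hne : NeZero ((2:ℕ) ^ m) := ⟨by positivity⟩
  have hcop : ∀ j ∈ (range (2 ^ m)).filter (fun j => Odd j), Nat.Coprime j (2 ^ m) := by
    intro j hj
    simp only [mem_filter] at hj
    exact Nat.Coprime.pow_right m (Nat.coprime_two_right.mpr hj.2)
  refine Finset.sum_bij (fun j hj => ZMod.unitOfCoprime j (hcop j hj))
    (fun _ _ => mem_univ _) ?_ ?_ ?_
  · intro a ha b hb hab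
    have h1 := congrArg (fun u : (ZMod (2 ^ m))ˣ => (u : ZMod (2 ^ m))) hab
    simp only [ZMod.coe_unitOfCoprime] at h1
    have ha' := mem_range.mp (mem_filter.mp ha).1
    have hb' := mem_range.mp (mem_filter.mp hb).1
    have h2 := congrArg ZMod.val h1
    rwa [ZMod.val_cast_of_lt ha', ZMod.val_cast_of_lt hb'] at h2
  · intro u _
    refine ⟨((u : ZMod (2 ^ m))).val, ?_, ?_⟩
    · simp only [mem_filter, mem_range]
      refine ⟨ZMod.val_lt _, ?_⟩
      have hcu := ZMod.val_coe_unit_coprime u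
      have h2 : Nat.Coprime (((u : ZMod (2 ^ m))).val) 2 :=
        Nat.Coprime.coprime_dvd_right (dvd_pow_self 2 (by omega)) hcu
      exact Nat.coprime_two_right.mp h2
    · exact Units.ext (by simp only [ZMod.coe_unitOfCoprime]
                          exact ZMod.natCast_rightInverse _)
  · intro j hj
    simp only [ZMod.coe_unitOfCoprime]

theorem sigma_hat_one_mod (e : ℕ) (he : 2 ≤ e) :
    (∑ j ∈ (Finset.range (2 ^ e)).filter (fun j => Odd j),
      ∏ i ∈ ((Finset.range (2 ^ e)).filter (fun j => Odd j)).erase j, i)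
      ≡ 2 ^ (2 * e - 2) [MOD 2 ^ (2 * e - 1)] := by
  obtain ⟨m, rfl⟩ : ∃ m, e = m + 1 := ⟨e - 1, by omega⟩
  have hm : 1 ≤ m := by omega
  have hrange : (2 : ℕ) ^ (m + 1) = 2 * 2 ^ m := pow_succ' 2 m
  rw [hrange]
  have hEeven : Even ((2:ℕ) ^ m) := (Nat.even_pow).mpr ⟨by decide, by omega⟩
  obtain ⟨c, hc⟩ := hEeven
  have hcpos : 1 ≤ c := by
    have : (2:ℕ) ^ m ≠ 0 := by positivity
    omega
  set T : Finset ℕ := (range (2 * 2 ^ m)).filter (fun j => Odd j) with hT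
  set T₁ : Finset ℕ := (range (2 ^ m)).filter (fun j => Odd j) with hT₁
  have hdec : T = T₁ ∪ T₁.image (fun j => 2 * 2 ^ m - j) :=
    aux_filter_odd_reflect (2 ^ m) ⟨c, hc⟩
  have hdisj : Disjoint T₁ (T₁.image (fun j => 2 * 2 ^ m - j)) := by
    simp only [hT₁, disjoint_left, mem_image, mem_filter, mem_range]
    rintro a ⟨ha, _⟩ ⟨i, ⟨hi, hio⟩, rfl⟩
    simp only [Nat.odd_iff] at *
    omega
  have hinj : ∀ a ∈ T₁, ∀ b ∈ T₁, 2 * 2 ^ m - a = 2 * 2 ^ m - b → a = b := by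
    intro a ha b hb hab
    simp only [hT₁, mem_filter, mem_range] at ha hb
    omega
  -- membership facts for j ∈ T₁
  have hmem : ∀ j ∈ T₁, j < 2 ^ m ∧ j % 2 = 1 := by
    intro j hj
    simp only [hT₁, mem_filter, mem_range, Nat.odd_iff] at hj
    exact hj
  have hjT : ∀ j ∈ T₁, j ∈ T := by
    intro j hj
    obtain ⟨h1, h2⟩ := hmem j hj
    simp only [hT, mem_filter, mem_range, Nat.odd_iff]
    omega
  have hj'T : ∀ j ∈ T₁, 2 * 2 ^ m - j ∈ T := by
    intro j hj
    obtain ⟨h1, h2⟩ := hmem j hj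
    simp only [hT, mem_filter, mem_range, Nat.odd_iff]
    omega
  have hne : ∀ j ∈ T₁, 2 * 2 ^ m - j ≠ j := by
    intro j hj
    obtain ⟨h1, h2⟩ := hmem j hj
    omega
  -- the complementary product
  set Q : ℕ → ℕ := fun j => ∏ i ∈ (T.erase j).erase (2 * 2 ^ m - j), i with hQ
  set P : ℕ := ∏ i ∈ T, i with hPdef
  have hprodsplit : ∀ j ∈ T₁, ∏ i ∈ T.erase j, i = (2 * 2 ^ m - j) * Q j := by
    intro j hj
    exact (Finset.mul_prod_erase _ _ (mem_erase.mpr ⟨hne j hj, hj'T j hj⟩)).symm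
  have hP : ∀ j ∈ T₁, P = j * ((2 * 2 ^ m - j) * Q j) := by
    intro j hj
    have h0 : j * ∏ i ∈ T.erase j, i = ∏ i ∈ T, i :=
      Finset.mul_prod_erase T (fun i => i) (hjT j hj)
    rw [hPdef, ← h0, hprodsplit j hj]
  have hstep : ∀ j ∈ T₁,
      (∏ i ∈ T.erase j, i) + (∏ i ∈ T.erase (2 * 2 ^ m - j), i) = 2 * 2 ^ m * Q j := by
    intro j hj
    obtain ⟨h1, h2⟩ := hmem j hj
    have h3 : ∏ i ∈ T.erase (2 * 2 ^ m - j), i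
        = j * ∏ i ∈ (T.erase (2 * 2 ^ m - j)).erase j, i :=
      (Finset.mul_prod_erase _ _ (mem_erase.mpr ⟨Ne.symm (hne j hj), hjT j hj⟩)).symm
    rw [hprodsplit j hj, h3, Finset.erase_right_comm]
    have hQj : ∏ i ∈ (T.erase j).erase (2 * 2 ^ m - j), i = Q j := rfl
    have h4 : 2 * 2 ^ m - j + j = 2 * 2 ^ m := by omega
    rw [hQj, ← add_mul, h4]
  -- split the sum
  have hsplit := aux_sum_split T T₁ (fun j => 2 * 2 ^ m - j) hdec hdisj hinj
    (fun j => ∏ i ∈ T.erase j, i)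
  have hS : (∑ j ∈ T, ∏ i ∈ T.erase j, i) = 2 * 2 ^ m * ∑ j ∈ T₁, Q j := by
    rw [hsplit, ← Finset.sum_add_distrib,
      Finset.sum_congr rfl (fun j hj => hstep j hj), ← Finset.mul_sum]
  rw [hS]
  -- the key congruence for A = ∑ Q j
  have hPodd : Odd P := by
    refine Finset.prod_induction _ Odd (fun a b ha hb => ha.mul hb) odd_one ?_
    intro i hi
    exact (mem_filter.mp hi).2
  have hA : (∑ j ∈ T₁, Q j) ≡ 2 ^ (m - 1) [MOD 2 ^ m] := by
    rw [← ZMod.natCast_eq_natCast_iff]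
    push_cast
    have hcastQ : ∀ j ∈ T₁, ((Q j : ℕ) : ZMod (2 ^ m))
        = ((j : ZMod (2 ^ m))⁻¹) ^ 2 * (-(P : ZMod (2 ^ m))) := by
      intro j hj
      obtain ⟨h1, h2⟩ := hmem j hj
      have hle : j ≤ 2 * 2 ^ m := by omega
      have hcast2E : ((2 * 2 ^ m : ℕ) : ZMod (2 ^ m)) = 0 := by
        rw [ZMod.natCast_eq_zero_iff]
        exact ⟨2, by ring⟩
      have hcastj' : ((2 * 2 ^ m - j : ℕ) : ZMod (2 ^ m)) = -(j : ZMod (2 ^ m)) := by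
        rw [Nat.cast_sub hle, hcast2E]
        ring
      have heq : ((j : ZMod (2 ^ m))) ^ 2 * (Q j : ZMod (2 ^ m)) = -(P : ZMod (2 ^ m)) := by
        have := congrArg (fun n : ℕ => (n : ZMod (2 ^ m))) (hP j hj)
        simp only [Nat.cast_mul] at this
        rw [hcastj'] at this
        rw [this]
        ring
      have hu : IsUnit ((j : ℕ) : ZMod (2 ^ m)) := by
        rw [ZMod.isUnit_iff_coprime]
        exact Nat.Coprime.pow_right m (Nat.coprime_two_right.mpr (Nat.odd_iff.mpr h2))
      have hji : ((j : ℕ) : ZMod (2 ^ m)) * ((j : ℕ) : ZMod (2 ^ m))⁻¹ = 1 :=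
        ZMod.mul_inv_of_unit _ hu
      calc ((Q j : ℕ) : ZMod (2 ^ m))
          = (((j : ℕ) : ZMod (2 ^ m)) * ((j : ℕ) : ZMod (2 ^ m))⁻¹) ^ 2
              * (Q j : ZMod (2 ^ m)) := by rw [hji]; ring
        _ = (((j : ℕ) : ZMod (2 ^ m))⁻¹) ^ 2
              * (((j : ℕ) : ZMod (2 ^ m)) ^ 2 * (Q j : ZMod (2 ^ m))) := by ring
        _ = (((j : ℕ) : ZMod (2 ^ m))⁻¹) ^ 2 * (-(P : ZMod (2 ^ m))) := by rw [heq]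
    rw [Finset.sum_congr rfl hcastQ, ← Finset.sum_mul]
    have hsum1 : (∑ j ∈ T₁, (((j : ℕ) : ZMod (2 ^ m))⁻¹) ^ 2)
        = ∑ j ∈ T₁, ((j : ℕ) : ZMod (2 ^ m)) ^ 2 := by
      rw [hT₁, aux_sum_units m hm (fun x => (x⁻¹) ^ 2), aux_sum_units m hm (fun x => x ^ 2)]
      calc ∑ u : (ZMod (2 ^ m))ˣ, (((u : (ZMod (2 ^ m))ˣ) : ZMod (2 ^ m))⁻¹) ^ 2
          = ∑ u : (ZMod (2 ^ m))ˣ, (((u⁻¹ : (ZMod (2 ^ m))ˣ) : ZMod (2 ^ m))) ^ 2 := by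
            refine Finset.sum_congr rfl fun u _ => ?_
            rw [ZMod.inv_coe_unit]
        _ = ∑ u : (ZMod (2 ^ m))ˣ, (((u : (ZMod (2 ^ m))ˣ) : ZMod (2 ^ m))) ^ 2 :=
            Fintype.sum_equiv (Equiv.inv _) _ _ (fun u => by simp)
    rw [hsum1]
    have hsum2 : (∑ j ∈ T₁, ((j : ℕ) : ZMod (2 ^ m)) ^ 2)
        = ((∑ j ∈ T₁, j ^ 2 : ℕ) : ZMod (2 ^ m)) := by
      push_cast
      rfl
    have hsq : ((∑ j ∈ T₁, j ^ 2 : ℕ) : ZMod (2 ^ m)) = ((2 ^ (m - 1) : ℕ) : ZMod (2 ^ m)) := by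
      rw [ZMod.natCast_eq_natCast_iff]
      rw [hT₁]
      exact aux_sum_sq_odd m hm
    rw [hsum2, hsq]
    obtain ⟨k, hk⟩ := hPodd
    have hz : ((2 ^ (m - 1) * (P + 1) : ℕ) : ZMod (2 ^ m)) = 0 := by
      rw [ZMod.natCast_eq_zero_iff]
      refine ⟨k + 1, ?_⟩
      rw [hk, show (2 : ℕ) ^ m = 2 ^ (m - 1) * 2 from by rw [← pow_succ]; congr 1; omega]
      ring
    push_cast at hz ⊢
    linear_combination -hz
  have hfin := Nat.ModEq.mul_left' (c := 2 * 2 ^ m) hA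
  have e1 : 2 * 2 ^ m * 2 ^ (m - 1) = 2 ^ (2 * (m + 1) - 2) := by
    rw [mul_assoc, ← pow_add, ← pow_succ']
    congr 1
    omega
  have e2 : 2 * 2 ^ m * 2 ^ m = 2 ^ (2 * (m + 1) - 1) := by
    rw [mul_assoc, ← pow_add, ← pow_succ']
    congr 1
    omega
  rw [← e1, ← e2]
  exact hfin
end

section
/- For e ≥ 3, σ̂_2(S_e) ≡ 2^{e-2} modulo 2^{e-1}, where σ̂_2(S_e) = ∑_{a<b, a,b ∈ S_e} ∏_{i ∈ S_e, i ∉ {a,b}} i. -/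
open Finset

private lemma pow_pred (e : ℕ) (h : 1 ≤ e) : 2^e = 2*2^(e-1) := by
  cases e with
  | zero => omega
  | succ n => rw [pow_succ']; simp

private lemma filterOdd_sum (f : ℕ → ℕ) (n : ℕ) :
    ∑ j ∈ (Finset.range (2*n)).filter (fun j => Odd j), f j
      = ∑ k ∈ Finset.range n, f (2*k+1) := by
  induction n with
  | zero => simp
  | succ n ih =>
    rw [sum_filter] at ih ⊢
    rw [show 2*(n+1) = (2*n+1)+1 by ring, sum_range_succ, sum_range_succ, ih,
      sum_range_succ]
    simp [Nat.odd_iff, Nat.mul_add_mod, Nat.add_mod, Nat.mul_mod]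

private lemma odd_sum_sq (n : ℕ) : ∑ k ∈ Finset.range n, (2*k+1) = n^2 := by
  induction n with
  | zero => simp
  | succ n ih => rw [sum_range_succ, ih]; ring

private lemma odd_sq_sum (n : ℕ) :
    3 * (∑ k ∈ Finset.range n, (2*k+1)^2) + n = 4*n^3 := by
  induction n with
  | zero => simp
  | succ n ih => rw [sum_range_succ, mul_add, add_right_comm, ← Nat.succ_eq_add_one]
                 rw [Nat.succ_eq_add_one]
                 nlinarith [ih]

theorem sigma_hat_two_mod (e : ℕ) (he : 3 ≤ e) :
    (∑ a ∈ (Finset.range (2 ^ e)).filter (fun j => Odd j),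
      ∑ b ∈ ((Finset.range (2 ^ e)).filter (fun j => Odd j)).filter (fun b => a < b),
        ∏ i ∈ (((Finset.range (2 ^ e)).filter (fun j => Odd j)).erase a).erase b, i)
      ≡ 2 ^ (e - 2) [MOD 2 ^ (e - 1)] := by
  classical
  set m := 2 ^ e with hm
  haveI : NeZero m := ⟨by positivity⟩
  set S := (Finset.range m).filter (fun j => Odd j) with hS
  have hSval : S = (Finset.range m).filter (fun j => Odd j) := hS
  have hodd : ∀ a ∈ S, Odd a := fun a ha => (mem_filter.mp ha).2
  have hlt : ∀ a ∈ S, a < m := fun a ha => mem_range.mp (mem_filter.mp ha).1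
  clear_value S
  have hunit : ∀ a ∈ S, IsUnit (a : ZMod m) := by
    intro a ha
    rw [ZMod.isUnit_iff_coprime]
    exact Nat.Coprime.pow_right _ (Nat.coprime_two_right.mpr (hodd a ha))
  -- the inversion map
  have hinvmem : ∀ a ∈ S, ((a : ZMod m)⁻¹).val ∈ S := by
    intro a ha
    obtain ⟨u, hu⟩ := hunit a ha
    rw [← hu, ZMod.inv_coe_unit, hSval]
    refine mem_filter.mpr ⟨mem_range.mpr (ZMod.val_lt _), ?_⟩
    have h1 := ZMod.val_coe_unit_coprime (u⁻¹)
    have h2 : (2:ℕ) ∣ m := dvd_pow_self 2 (by omega)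
    exact Nat.coprime_two_right.mp (Nat.Coprime.coprime_dvd_right h2 h1)
  have hinvinv : ∀ a ∈ S, ((((a:ZMod m)⁻¹).val : ℕ) : ZMod m)⁻¹ = (a : ZMod m) := by
    intro a ha
    obtain ⟨u, hu⟩ := hunit a ha
    rw [← hu, ZMod.inv_coe_unit, ZMod.natCast_val, ZMod.cast_id, ZMod.inv_coe_unit, inv_inv]
  have hcastval : ∀ a ∈ S, ((((a:ZMod m)⁻¹).val : ℕ) : ZMod m) = (a:ZMod m)⁻¹ := by
    intro a ha
    rw [ZMod.natCast_val, ZMod.cast_id]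
  have hbij : ∀ f : ZMod m → ZMod m,
      ∑ a ∈ S, f ((a : ZMod m)⁻¹) = ∑ a ∈ S, f (a : ZMod m) := by
    intro f
    refine Finset.sum_nbij' (fun a => ((a : ZMod m)⁻¹).val)
      (fun a => ((a : ZMod m)⁻¹).val) hinvmem hinvmem ?_ ?_ ?_
    · intro a ha
      show (((((a : ZMod m)⁻¹).val : ℕ) : ZMod m)⁻¹).val = a
      rw [hinvinv a ha, ZMod.val_cast_of_lt (hlt a ha)]
    · intro a ha
      show (((((a : ZMod m)⁻¹).val : ℕ) : ZMod m)⁻¹).val = a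
      rw [hinvinv a ha, ZMod.val_cast_of_lt (hlt a ha)]
    · intro a ha
      show f ((a : ZMod m)⁻¹) = f (((((a : ZMod m)⁻¹).val : ℕ) : ZMod m))
      rw [hcastval a ha]
  set P : ZMod m := ∏ a ∈ S, (a : ZMod m) with hP
  have hprod : ∀ a ∈ S, ∀ b ∈ S, a ≠ b →
      (∏ i ∈ ((S.erase a).erase b), (i : ZMod m))
        = P * (a:ZMod m)⁻¹ * (b:ZMod m)⁻¹ := by
    intro a ha b hb hab
    have hb' : b ∈ S.erase a := mem_erase.mpr ⟨hab.symm, hb⟩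
    have h1 : (b:ZMod m) * ∏ i ∈ (S.erase a).erase b, (i:ZMod m)
        = ∏ i ∈ S.erase a, (i:ZMod m) := Finset.mul_prod_erase _ _ hb'
    have h2 : (a:ZMod m) * ∏ i ∈ S.erase a, (i:ZMod m) = P :=
      Finset.mul_prod_erase _ _ ha
    have ha' : (a:ZMod m) * (a:ZMod m)⁻¹ = 1 := ZMod.mul_inv_of_unit _ (hunit a ha)
    have hb'' : (b:ZMod m) * (b:ZMod m)⁻¹ = 1 := ZMod.mul_inv_of_unit _ (hunit b hb)
    rw [← h2, ← h1]
    calc (∏ i ∈ (S.erase a).erase b, (i:ZMod m))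
        = ((a:ZMod m) * (a:ZMod m)⁻¹) * (((b:ZMod m) * (b:ZMod m)⁻¹) *
            ∏ i ∈ (S.erase a).erase b, (i:ZMod m)) := by rw [ha', hb'']; ring
      _ = (a:ZMod m) * ((b:ZMod m) * ∏ i ∈ (S.erase a).erase b, (i:ZMod m))
            * (a:ZMod m)⁻¹ * (b:ZMod m)⁻¹ := by ring
  -- the natural number sum
  set σ : ℕ := ∑ a ∈ S, ∑ b ∈ S.filter (fun b => a < b),
      ∏ i ∈ ((S.erase a).erase b), i with hσ
  set F : ℕ → ℕ → ZMod m := fun a b => P * (a:ZMod m)⁻¹ * (b:ZMod m)⁻¹ with hF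
  have hcast : ((σ : ℕ) : ZMod m)
      = ∑ a ∈ S, ∑ b ∈ S.filter (fun b => a < b), F a b := by
    rw [hσ]
    push_cast
    refine sum_congr rfl fun a ha => sum_congr rfl fun b hb => ?_
    exact hprod a ha b (mem_filter.mp hb).1 (ne_of_lt (mem_filter.mp hb).2)
  -- doubling
  have hswap : ∑ a ∈ S, ∑ b ∈ S.filter (fun b => a < b), F a b
      = ∑ a ∈ S, ∑ b ∈ S.filter (fun b => b < a), F b a := by
    exact Finset.sum_comm' (by intro x y; simp only [mem_filter]; tauto)
  have hFsymm : ∀ a b, F b a = F a b := by intro a b; rw [hF]; ring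
  have hdouble : 2 * ((σ : ℕ) : ZMod m) = ∑ a ∈ S, ∑ b ∈ S.erase a, F a b := by
    rw [two_mul, hcast]
    nth_rewrite 2 [hswap]
    rw [← Finset.sum_add_distrib]
    refine sum_congr rfl fun a ha => ?_
    simp_rw [hFsymm]
    rw [← Finset.sum_filter_add_sum_filter_not (S.erase a) (fun b => a < b)]
    congr 1
    · apply Finset.sum_congr _ (fun _ _ => rfl)
      apply Finset.ext; intro b; simp only [mem_filter, mem_erase]
      constructor
      · rintro ⟨h1, h2⟩; exact ⟨⟨by omega, h1⟩, h2⟩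
      · rintro ⟨⟨h1, h2⟩, h3⟩; exact ⟨h2, h3⟩
    · apply Finset.sum_congr _ (fun _ _ => rfl)
      apply Finset.ext; intro b; simp only [mem_filter, mem_erase, not_lt]
      constructor
      · rintro ⟨h1, h2⟩; exact ⟨⟨by omega, h1⟩, by omega⟩
      · rintro ⟨⟨h1, h2⟩, h3⟩; exact ⟨h2, by omega⟩
  -- compute the double sum
  set T : ZMod m := ∑ a ∈ S, (a : ZMod m)⁻¹ with hT
  set U : ZMod m := ∑ a ∈ S, (a : ZMod m)⁻¹ * (a : ZMod m)⁻¹ with hU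
  have hinner : ∀ a ∈ S, ∑ b ∈ S.erase a, F a b
      = P * (a:ZMod m)⁻¹ * T - P * ((a:ZMod m)⁻¹ * (a:ZMod m)⁻¹) := by
    intro a ha
    rw [hF]
    simp only
    rw [← Finset.mul_sum, Finset.sum_erase_eq_sub ha, ← hT]
    ring
  have hdouble2 : 2 * ((σ : ℕ) : ZMod m) = P * T * T - P * U := by
    rw [hdouble, Finset.sum_congr rfl hinner, Finset.sum_sub_distrib]
    simp_rw [mul_assoc P]
    rw [← Finset.mul_sum, ← Finset.mul_sum, ← Finset.sum_mul, ← hT, ← hU]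
  -- T = 0
  have hT0 : T = 0 := by
    have h1 : T = ∑ a ∈ S, (a : ZMod m) := hbij id
    have h2 : (∑ a ∈ S, a) = (2^(e-1))^2 := by
      rw [hSval, hm, pow_pred e (by omega)]
      rw [filterOdd_sum (fun j => j) (2^(e-1)), odd_sum_sq]
    have h3 : ∑ a ∈ S, (a : ZMod m) = (((∑ a ∈ S, a : ℕ)) : ZMod m) := by push_cast; rfl
    rw [h1, h3, h2]
    rw [ZMod.natCast_eq_zero_iff, hm]
    rw [← pow_mul]
    exact pow_dvd_pow 2 (by omega)
  -- U = g
  set g : ℕ := ∑ a ∈ S, a*a with hg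
  have hUg : U = ((g : ℕ) : ZMod m) := by
    have h1 : U = ∑ a ∈ S, (a : ZMod m) * (a : ZMod m) := hbij (fun x => x * x)
    rw [h1, hg]; push_cast; rfl
  -- conclude the ZMod identity
  set Q : ℕ := ∏ a ∈ S, a with hQ
  have hzmod : ((2 * σ + Q * g : ℕ) : ZMod m) = 0 := by
    push_cast
    rw [hQ]
    push_cast
    rw [← hP, ← hUg]
    have := hdouble2
    rw [hT0] at this
    rw [show ((2:ZMod m) * (σ:ZMod m) : ZMod m) = 2 * ((σ:ℕ) : ZMod m) from rfl] at this
    linear_combination this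
  rw [ZMod.natCast_eq_zero_iff] at hzmod
  -- number theory on g
  set N : ℕ := 2^(e-1) with hN
  have hNpos : 0 < N := by positivity
  have hgN : 3 * g + N = 4 * N^3 := by
    have h2 : g = ∑ k ∈ Finset.range N, (2*k+1)^2 := by
      rw [hg, hSval, hm, hN, pow_pred e (by omega)]
      rw [filterOdd_sum (fun j => j*j) N]
      exact Finset.sum_congr rfl fun k _ => by ring
    rw [h2, odd_sq_sum]
  have hNdvd3g : N ∣ 3 * g := by
    have h1 : N ∣ 4 * N^3 := ⟨4 * N^2, by ring⟩
    have := Nat.dvd_sub h1 (dvd_refl N)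
    rwa [show 4*N^3 - N = 3*g by omega] at this
  have hNdvdg : N ∣ g := by
    have hcop : Nat.Coprime N 3 := Nat.Coprime.pow_left _ (by norm_num)
    exact hcop.dvd_of_dvd_mul_left hNdvd3g
  obtain ⟨mm, hmm⟩ := hNdvdg
  have hmmodd : Odd mm := by
    have h1 : N * (3 * mm + 1) = N * (4 * N^2) := by
      rw [hmm] at hgN; ring_nf at hgN ⊢; omega
    have h2 : 3 * mm + 1 = 4 * N^2 := Nat.eq_of_mul_eq_mul_left hNpos h1
    rw [Nat.odd_iff]; omega
  have hPodd : Odd Q := by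
    rw [hQ]
    refine Finset.prod_induction _ Odd (fun x y hx hy => ?_) odd_one hodd
    exact Nat.odd_mul.mpr ⟨hx, hy⟩
  -- final computation
  obtain ⟨k, hk⟩ := hzmod
  obtain ⟨c, hc⟩ : ∃ c, Q * mm + 1 = 2 * c := by
    have : Odd (Q * mm) := Nat.odd_mul.mpr ⟨hPodd, hmmodd⟩
    obtain ⟨t, ht⟩ := this
    exact ⟨t + 1, by omega⟩
  have hm4 : m = 4 * 2^(e-2) := by
    rw [hm, pow_pred e (by omega), pow_pred (e-1) (by omega),
      show e-1-1 = e-2 by omega]; ring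
  have hN2 : N = 2 * 2^(e-2) := by
    rw [hN, pow_pred (e-1) (by omega), show e-1-1 = e-2 by omega]
  have hk2 : 2*(σ:ℤ) + (Q:ℤ)*((N:ℤ)*(mm:ℤ)) = (m:ℤ)*(k:ℤ) := by
    have h0 : (2*σ + Q*g : ℕ) = m * k := hk
    rw [hmm] at h0; exact_mod_cast h0
  have hc2 : (Q:ℤ)*(mm:ℤ) + 1 = 2*(c:ℤ) := by exact_mod_cast hc
  have h1 : (N:ℤ) = 2*2^(e-2) := by rw [hN2]; push_cast; ring
  have h2 : (m:ℤ) = 4*2^(e-2) := by rw [hm4]; push_cast; ring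
  have h3 : (2:ℤ)^(e-1) = 2*2^(e-2) := by
    have h4 := hN2; rw [hN] at h4; exact_mod_cast h4
  rw [h1, h2] at hk2
  have key : (2:ℤ) * ((2:ℤ)^(e-2) - (σ:ℤ)) = 2 * (((2:ℤ)^(e-1)) * ((c:ℤ) - (k:ℤ))) := by
    rw [h3]
    linear_combination -hk2 + (2*(2:ℤ)^(e-2)) * hc2
  have key2 : (2:ℤ)^(e-2) - (σ:ℤ) = (2:ℤ)^(e-1) * ((c:ℤ) - (k:ℤ)) :=
    mul_left_cancel₀ two_ne_zero key
  rw [h3] at key2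
  rw [Nat.modEq_iff_dvd]
  push_cast
  rw [h1]
  exact ⟨_, key2⟩
end

section
/- For e ≥ 3, ∑_{i ∈ S_e} ((2^e - 1)!!)^2 / i^2 ≡ 2^{e-1} modulo 2^e, where each summand is the integer obtained by squaring the product of all odd positive integers less than 2^e except i. -/
open Finset

private lemma odd_filter_sum (n : ℕ) (f : ℕ → ℕ) :
    ∑ i ∈ (Finset.range (2*n)).filter (fun j => Odd j), f i
      = ∑ k ∈ Finset.range n, f (2*k+1) := by
  refine Finset.sum_nbij' (fun i => i / 2) (fun k => 2*k+1) ?_ ?_ ?_ ?_ ?_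
  · intro a ha
    simp only [Finset.mem_filter, Finset.mem_range] at ha
    obtain ⟨m, hm⟩ := ha.2
    simp only [Finset.mem_range]
    omega
  · intro k hk
    simp only [Finset.mem_range] at hk
    simp only [Finset.mem_filter, Finset.mem_range]
    exact ⟨by omega, ⟨k, by omega⟩⟩
  · intro a ha
    simp only [Finset.mem_filter] at ha
    obtain ⟨m, hm⟩ := ha.2
    omega
  · intro a _; omega
  · intro a ha
    simp only [Finset.mem_filter] at ha
    obtain ⟨m, hm⟩ := ha.2
    congr 1
    omega

private lemma three_mul_sum (n : ℕ) :
    3 * (∑ k ∈ Finset.range n, (2*k+1)^2) + n = 4 * n^3 := by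
  induction n with
  | zero => simp
  | succ n ih =>
    rw [Finset.sum_range_succ]
    zify at ih ⊢
    linear_combination ih

private lemma sum_odd_sq_mod (e : ℕ) (he : 3 ≤ e) :
    ∑ i ∈ (Finset.range (2^e)).filter (fun j => Odd j), i^2
      ≡ 2^(e-1) [MOD 2^e] := by
  obtain ⟨k, rfl⟩ : ∃ k, e = k + 3 := ⟨e - 3, by omega⟩
  set n : ℕ := 2^(k+2) with hn
  have h2n : 2^(k+3) = 2*n := by rw [hn]; ring
  have hsub : k + 3 - 1 = k + 2 := by omega
  rw [hsub, ← hn, h2n, odd_filter_sum]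
  set S : ℕ := ∑ kk ∈ Finset.range n, (2*kk+1)^2 with hS
  have key : 3 * S + n = 4 * n^3 := three_mul_sum n
  have h4 : 4 * n^3 ≡ 4 * n [MOD 2*n] := by
    rw [Nat.modEq_iff_dvd]
    refine ⟨2 - 2*(n:ℤ)^2, ?_⟩
    push_cast
    ring
  have h3 : 3 * S + n ≡ 3 * n + n [MOD 2*n] := by
    have : (3:ℕ) * n + n = 4 * n := by ring
    rw [key, this]
    exact h4
  have h3' : 3 * S ≡ 3 * n [MOD 2*n] := Nat.ModEq.add_right_cancel' n h3
  have hcop : (2*n).gcd 3 = 1 := by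
    rw [← h2n]
    have : Nat.Coprime (2^(k+3)) 3 := Nat.Coprime.pow_left _ (by decide)
    exact this
  exact Nat.ModEq.cancel_left_of_coprime hcop h3'

theorem sum_sq_mod (e : ℕ) (he : 3 ≤ e) :
    (∑ i ∈ (Finset.range (2 ^ e)).filter (fun j => Odd j),
      ((∏ j ∈ (Finset.range (2 ^ e)).filter (fun j => Odd j), j) / i) ^ 2)
      ≡ 2 ^ (e - 1) [MOD 2 ^ e] := by
  set N : ℕ := 2^e with hNdef
  haveI : NeZero N := ⟨by positivity⟩
  set Sf : Finset ℕ := (Finset.range N).filter (fun j => Odd j) with hSf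
  set P : ℕ := ∏ j ∈ Sf, j with hP
  -- facts about elements of Sf
  have hmem : ∀ i ∈ Sf, i < N ∧ Odd i := by
    intro i hi
    simp only [hSf, Finset.mem_filter, Finset.mem_range] at hi
    exact hi
  have hunit : ∀ i ∈ Sf, IsUnit ((i : ℕ) : ZMod N) := by
    intro i hi
    rw [ZMod.isUnit_iff_coprime]
    exact Nat.Coprime.pow_right e ((hmem i hi).2.coprime_two_right)
  -- the inversion involution on Sf
  set g : ℕ → ℕ := fun i => (((i : ℕ) : ZMod N)⁻¹).val with hg
  have hcastg : ∀ i, ((g i : ℕ) : ZMod N) = ((i : ℕ) : ZMod N)⁻¹ := by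
    intro i
    simp [hg, ZMod.natCast_val, ZMod.cast_id]
  have hginv_unit : ∀ i ∈ Sf, IsUnit (((g i : ℕ)) : ZMod N) := by
    intro i hi
    rw [hcastg]
    exact IsUnit.of_mul_eq_one _ (ZMod.inv_mul_of_unit _ (hunit i hi))
  have hgmem : ∀ i ∈ Sf, g i ∈ Sf := by
    intro i hi
    simp only [hSf, Finset.mem_filter, Finset.mem_range]
    constructor
    · exact ZMod.val_lt _
    · -- g i is odd
      have h1 : ((g i * i : ℕ) : ZMod N) = ((1 : ℕ) : ZMod N) := by
        push_cast
        rw [hcastg]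
        exact ZMod.inv_mul_of_unit _ (hunit i hi)
      have h2 : g i * i ≡ 1 [MOD N] := (ZMod.natCast_eq_natCast_iff _ _ _).mp h1
      have h3 : g i * i ≡ 1 [MOD 2] := h2.of_dvd (dvd_pow_self 2 (by omega))
      have : g i * i % 2 = 1 % 2 := h3
      rcases Nat.even_or_odd (g i) with hev | hod
      · exfalso
        have h2d : 2 ∣ g i * i := Dvd.dvd.mul_right hev.two_dvd i
        omega
      · exact hod
  have hgg : ∀ i ∈ Sf, g (g i) = i := by
    intro i hi
    have h1 : ((g (g i) : ℕ) : ZMod N) = ((i : ℕ) : ZMod N) := by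
      rw [hcastg, hcastg]
      have hb : (((i : ℕ) : ZMod N)⁻¹) * ((i : ℕ) : ZMod N) = 1 :=
        ZMod.inv_mul_of_unit _ (hunit i hi)
      have hbu : IsUnit (((i : ℕ) : ZMod N)⁻¹) := IsUnit.of_mul_eq_one _ hb
      calc (((i : ℕ) : ZMod N)⁻¹)⁻¹
          = (((i : ℕ) : ZMod N)⁻¹)⁻¹ * ((((i : ℕ) : ZMod N)⁻¹) * ((i : ℕ) : ZMod N)) := by
            rw [hb, mul_one]
        _ = ((((i : ℕ) : ZMod N)⁻¹)⁻¹ * (((i : ℕ) : ZMod N)⁻¹)) * ((i : ℕ) : ZMod N) := by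
            ring
        _ = ((i : ℕ) : ZMod N) := by rw [ZMod.inv_mul_of_unit _ hbu, one_mul]
    have := (ZMod.natCast_eq_natCast_iff _ _ _).mp h1
    have hlt1 : g (g i) < N := ZMod.val_lt _
    have hlt2 : i < N := (hmem i hi).1
    calc g (g i) = g (g i) % N := (Nat.mod_eq_of_lt hlt1).symm
      _ = i % N := this
      _ = i := Nat.mod_eq_of_lt hlt2
  -- reindexing lemma: for any function on ZMod N
  have hreindex : ∀ F : ZMod N → ZMod N,
      ∑ i ∈ Sf, F (((i : ℕ) : ZMod N)⁻¹) = ∑ i ∈ Sf, F ((i : ℕ) : ZMod N) := by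
    intro F
    refine Finset.sum_nbij' g g hgmem hgmem hgg hgg ?_
    intro a ha
    rw [hcastg]
  -- product reindexing
  have hprodinv : ∏ i ∈ Sf, (((i : ℕ) : ZMod N)⁻¹) = ∏ i ∈ Sf, ((i : ℕ) : ZMod N) := by
    refine Finset.prod_nbij' g g hgmem hgmem hgg hgg ?_
    intro a ha
    rw [hcastg]
  have hPsq : ((P : ℕ) : ZMod N)^2 = 1 := by
    have : ((P : ℕ) : ZMod N) = ∏ i ∈ Sf, ((i : ℕ) : ZMod N) := by
      rw [hP]; push_cast; rfl
    have h2 : ((P : ℕ) : ZMod N)^2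
        = (∏ i ∈ Sf, ((i:ℕ):ZMod N)) * ∏ i ∈ Sf, (((i:ℕ):ZMod N))⁻¹ := by
      rw [hprodinv, this, sq]
    rw [h2, ← Finset.prod_mul_distrib,
      Finset.prod_congr rfl (fun i hi => ZMod.mul_inv_of_unit _ (hunit i hi))]
    simp
  -- each term
  have hterm : ∀ i ∈ Sf, ((P / i : ℕ) : ZMod N) = ((P : ℕ) : ZMod N) * (((i : ℕ) : ZMod N)⁻¹) := by
    intro i hi
    have hdvd : i ∣ P := Finset.dvd_prod_of_mem _ hi
    have h1 : ((P / i : ℕ) : ZMod N) * ((i : ℕ) : ZMod N) = ((P : ℕ) : ZMod N) := by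
      rw [← Nat.cast_mul, Nat.div_mul_cancel hdvd]
    calc ((P / i : ℕ) : ZMod N)
        = ((P / i : ℕ) : ZMod N) * (((i : ℕ) : ZMod N) * ((i : ℕ) : ZMod N)⁻¹) := by
          rw [ZMod.mul_inv_of_unit _ (hunit i hi), mul_one]
      _ = (((P / i : ℕ) : ZMod N) * ((i : ℕ) : ZMod N)) * ((i : ℕ) : ZMod N)⁻¹ := by ring
      _ = ((P : ℕ) : ZMod N) * (((i : ℕ) : ZMod N)⁻¹) := by rw [h1]
  -- main computation in ZMod N
  rw [← ZMod.natCast_eq_natCast_iff]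
  push_cast
  calc ∑ i ∈ Sf, ((P / i : ℕ) : ZMod N)^2
      = ∑ i ∈ Sf, (((P : ℕ) : ZMod N) * (((i : ℕ) : ZMod N)⁻¹))^2 := by
        refine Finset.sum_congr rfl fun i hi => ?_
        rw [hterm i hi]
    _ = ((P : ℕ) : ZMod N)^2 * ∑ i ∈ Sf, ((((i : ℕ) : ZMod N))⁻¹)^2 := by
        rw [Finset.mul_sum]
        refine Finset.sum_congr rfl fun i hi => ?_
        ring
    _ = ∑ i ∈ Sf, ((((i : ℕ) : ZMod N))⁻¹)^2 := by rw [hPsq, one_mul]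
    _ = ∑ i ∈ Sf, (((i : ℕ) : ZMod N))^2 := hreindex (fun x => x^2)
    _ = ((∑ i ∈ Sf, i^2 : ℕ) : ZMod N) := by push_cast; rfl
    _ = ((2^(e-1) : ℕ) : ZMod N) := by
        rw [ZMod.natCast_eq_natCast_iff]
        exact sum_odd_sq_mod e he
    _ = (2:ZMod N)^(e-1) := by push_cast; rfl
end

section
/- For e ≥ 3, define T_{1,e} = ∑ (2^e - 1)!!/(a·b) taken over pairs (a,b) with a < b both odd, less than 2^e, and a ≢ b modulo 2^{e-1}. Then T_{1,e} ≡ 0 modulo 2^{e-1}. -/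
open Finset

lemma zmod_inv_eq {n : ℕ} {y z : ZMod n} (h : y * z = 1) : y⁻¹ = z := by
  have hy : IsUnit y := IsUnit.of_mul_eq_one _ h
  calc y⁻¹ = y⁻¹ * (y * z) := by rw [h, mul_one]
    _ = (y⁻¹ * y) * z := by ring
    _ = z := by rw [ZMod.inv_mul_of_unit y hy, one_mul]

lemma zmod_inv_inv {n : ℕ} {y : ZMod n} (hy : IsUnit y) : y⁻¹⁻¹ = y :=
  zmod_inv_eq (ZMod.inv_mul_of_unit y hy)

lemma odd_isUnit {e a : ℕ} (ha : Odd a) : IsUnit ((a : ZMod (2 ^ e))) :=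
  (ZMod.isUnit_iff_coprime a (2 ^ e)).mpr
    (Nat.Coprime.pow_right _ (Nat.coprime_two_right.mpr ha))

lemma zmod_mul_inv {n : ℕ} {x y : ZMod n} (hx : IsUnit x) (hy : IsUnit y) :
    (x * y)⁻¹ = x⁻¹ * y⁻¹ := by
  apply zmod_inv_eq
  calc x * y * (x⁻¹ * y⁻¹) = (x * x⁻¹) * (y * y⁻¹) := by ring
    _ = 1 := by rw [ZMod.mul_inv_of_unit x hx, ZMod.mul_inv_of_unit y hy, one_mul]

lemma sum_odds (m : ℕ) : ∑ k ∈ Finset.range m, (2 * k + 1) = m ^ 2 := by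
  induction m with
  | zero => simp
  | succ m ih => rw [Finset.sum_range_succ, ih]; ring

lemma sum_odd_sq_dvd (t : ℕ) : 2 ^ t ∣ ∑ k ∈ Finset.range (2 ^ t), (2 * k + 1) ^ 2 := by
  induction t with
  | zero => simp
  | succ t ih =>
    have h2 : (2:ℕ) ^ (t+1) = 2 ^ t + 2 ^ t := by ring
    rw [h2, Finset.sum_range_add]
    have key : ∀ k, (2 * (2 ^ t + k) + 1) ^ 2
        = (2 * k + 1) ^ 2 + (4 * 2 ^ t) * (2 * k + 1) + 4 * (2^t)^2 := by
      intro k; ring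
    rw [Finset.sum_congr rfl (fun k _ => key k)]
    rw [Finset.sum_add_distrib, Finset.sum_add_distrib, ← Finset.mul_sum, sum_odds,
      Finset.sum_const, Finset.card_range]
    obtain ⟨c, hc⟩ := ih
    rw [hc]
    refine ⟨c + 4 * (2 ^ t) ^ 2, ?_⟩
    simp only [smul_eq_mul]
    ring
open Finset

lemma S_image {e : ℕ} (he : 1 ≤ e) :
    (Finset.range (2^e)).filter (fun j => Odd j)
      = (Finset.range (2^(e-1))).image (fun k => 2*k+1) := by
  have h2e : (2:ℕ)^e = 2 * 2^(e-1) := by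
    conv_lhs => rw [show e = (e-1)+1 by omega]
    ring
  ext j
  simp only [mem_filter, mem_range, mem_image, Nat.odd_iff]
  constructor
  · rintro ⟨hj, hodd⟩
    exact ⟨j / 2, by omega, by omega⟩
  · rintro ⟨k, hk, rfl⟩
    constructor <;> omega

lemma S_sum {e : ℕ} (he : 1 ≤ e) :
    ∑ j ∈ (Finset.range (2^e)).filter (fun j => Odd j), j = (2^(e-1))^2 := by
  rw [S_image he, Finset.sum_image (by intro x _ y _ h; simp only at h; omega)]
  exact sum_odds _

lemma S_sum_sq {e : ℕ} (he : 1 ≤ e) :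
    2^(e-1) ∣ ∑ j ∈ (Finset.range (2^e)).filter (fun j => Odd j), j^2 := by
  rw [S_image he, Finset.sum_image (by intro x _ y _ h; simp only at h; omega)]
  exact sum_odd_sq_dvd _
open Finset

lemma Simg_inv_mem {e : ℕ} (he : 1 ≤ e) {x : ZMod (2^e)}
    (hx : x ∈ ((Finset.range (2^e)).filter (fun j => Odd j)).image
      (Nat.cast : ℕ → ZMod (2^e))) :
    x⁻¹ ∈ ((Finset.range (2^e)).filter (fun j => Odd j)).image
      (Nat.cast : ℕ → ZMod (2^e)) := by
  haveI : NeZero (2^e) := ⟨by positivity⟩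
  simp only [mem_image, mem_filter, mem_range] at hx ⊢
  obtain ⟨a, ⟨-, hodd⟩, rfl⟩ := hx
  have hu : IsUnit ((a : ZMod (2^e))) := odd_isUnit hodd
  have hui : IsUnit ((a : ZMod (2^e))⁻¹) :=
    IsUnit.of_mul_eq_one _ (ZMod.inv_mul_of_unit _ hu)
  refine ⟨((a : ZMod (2^e))⁻¹).val, ⟨ZMod.val_lt _, ?_⟩, ZMod.natCast_rightInverse _⟩
  have hcop : (((a : ZMod (2^e))⁻¹).val).Coprime (2^e) := by
    have := ZMod.val_coe_unit_coprime hui.unit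
    rwa [IsUnit.unit_spec] at this
  have : (((a : ZMod (2^e))⁻¹).val).Coprime 2 :=
    Nat.Coprime.coprime_dvd_right (dvd_pow_self 2 (by omega)) hcop
  exact Nat.coprime_two_right.mp this

lemma sum_inv_eq {e : ℕ} (he : 1 ≤ e) (F : ZMod (2^e) → ZMod (2^e)) :
    ∑ a ∈ (Finset.range (2^e)).filter (fun j => Odd j), F ((a : ZMod (2^e))⁻¹)
      = ∑ a ∈ (Finset.range (2^e)).filter (fun j => Odd j), F ((a : ZMod (2^e))) := by
  have hinj : ∀ x ∈ (Finset.range (2^e)).filter (fun j => Odd j),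
      ∀ y ∈ (Finset.range (2^e)).filter (fun j => Odd j),
      (x : ZMod (2^e)) = (y : ZMod (2^e)) → x = y := by
    intro x hx y hy h
    simp only [mem_filter, mem_range] at hx hy
    have := congrArg ZMod.val h
    rwa [ZMod.val_cast_of_lt hx.1, ZMod.val_cast_of_lt hy.1] at this
  rw [← Finset.sum_image (f := fun x => F x⁻¹) hinj,
      ← Finset.sum_image (f := fun x => F x) hinj]
  refine Finset.sum_nbij' (fun x => x⁻¹) (fun x => x⁻¹)
    (fun x hx => Simg_inv_mem he hx) (fun x hx => Simg_inv_mem he hx) ?_ ?_ (fun a _ => rfl)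
  all_goals
    intro x hx
    simp only [mem_image, mem_filter, mem_range] at hx
    obtain ⟨a, ⟨-, hodd⟩, rfl⟩ := hx
    exact zmod_inv_inv (odd_isUnit hodd)

lemma C1 {e : ℕ} (he : 2 ≤ e) :
    ∑ a ∈ (Finset.range (2^e)).filter (fun j => Odd j), ((a : ZMod (2^e)))⁻¹ = 0 := by
  rw [sum_inv_eq (e := e) (by omega) (fun x => x), ← Nat.cast_sum, S_sum (by omega),
    ZMod.natCast_eq_zero_iff]
  have : (2:ℕ)^(e-1) * 2^(e-1) = 2^(2*e-2) := by
    rw [← pow_add]; congr 1; omega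
  rw [pow_two, this]
  exact pow_dvd_pow 2 (by omega)

lemma C3 {e : ℕ} (he : 1 ≤ e) :
    2 * ∑ a ∈ (Finset.range (2^e)).filter (fun j => Odd j), ((a : ZMod (2^e)))⁻¹ ^ 2 = 0 := by
  rw [sum_inv_eq he (fun x => x ^ 2)]
  have : ∑ a ∈ (Finset.range (2^e)).filter (fun j => Odd j), ((a : ZMod (2^e))) ^ 2
      = ((∑ j ∈ (Finset.range (2^e)).filter (fun j => Odd j), j^2 : ℕ) : ZMod (2^e)) := by
    push_cast; rfl
  rw [this]
  have h2 : (2 : ZMod (2^e)) * ((∑ j ∈ (Finset.range (2^e)).filter (fun j => Odd j), j^2 : ℕ) : ZMod (2^e))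
      = ((2 * ∑ j ∈ (Finset.range (2^e)).filter (fun j => Odd j), j^2 : ℕ) : ZMod (2^e)) := by
    push_cast; ring
  rw [h2, ZMod.natCast_eq_zero_iff]
  obtain ⟨c, hc⟩ := S_sum_sq he
  rw [hc, ← mul_assoc]
  exact Dvd.dvd.mul_right ⟨1, by rw [mul_one, ← pow_succ']; congr 1; omega⟩ c
open Finset

lemma inv_add_half {e a : ℕ} (he : 2 ≤ e) (ha : Odd a) :
    ((a : ZMod (2^e)) + ((2^(e-1) : ℕ) : ZMod (2^e)))⁻¹
      = (a : ZMod (2^e))⁻¹ + ((2^(e-1) : ℕ) : ZMod (2^e)) := by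
  set x : ZMod (2^e) := (a : ZMod (2^e)) with hx
  set h : ZMod (2^e) := ((2^(e-1) : ℕ) : ZMod (2^e)) with hh
  have hu : IsUnit x := odd_isUnit ha
  have h2h : 2 * h = 0 := by
    rw [hh, show (2 : ZMod (2^e)) = ((2:ℕ) : ZMod (2^e)) by push_cast; ring,
      ← Nat.cast_mul, show 2 * 2^(e-1) = 2^e by rw [← pow_succ']; congr 1; omega,
      ZMod.natCast_self]
  have hhh : h * h = 0 := by
    have : h = ((2^(e-2) : ℕ) : ZMod (2^e)) * 2 := by
      rw [hh, show (2 : ZMod (2^e)) = ((2:ℕ) : ZMod (2^e)) by push_cast; ring,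
        ← Nat.cast_mul]
      congr 1
      rw [← pow_succ]; congr 1; omega
    calc h * h = ((2^(e-2) : ℕ) : ZMod (2^e)) * (2 * h) := by rw [this]; ring
      _ = 0 := by rw [h2h, mul_zero]
  obtain ⟨k, hk⟩ : ∃ k, a^2 + 1 = 2*k := by
    obtain ⟨r, hr⟩ := ha.pow (n := 2)
    exact ⟨r + 1, by rw [hr]; ring⟩
  have hxx : h * (x + x⁻¹) = 0 := by
    have hkey : x + x⁻¹ = x⁻¹ * ((a^2 + 1 : ℕ) : ZMod (2^e)) := by
      push_cast
      rw [← hx]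
      calc x + x⁻¹ = (x⁻¹ * x) * x + x⁻¹ := by rw [ZMod.inv_mul_of_unit x hu]; ring
        _ = x⁻¹ * (x^2 + 1) := by ring
    rw [hkey, hk]
    push_cast
    calc h * (x⁻¹ * (2 * (k:ZMod (2^e)))) = (x⁻¹ * k) * (2 * h) := by ring
      _ = 0 := by rw [h2h, mul_zero]
  apply zmod_inv_eq
  calc (x + h) * (x⁻¹ + h) = x * x⁻¹ + h * (x + x⁻¹) + h * h := by ring
    _ = 1 := by rw [ZMod.mul_inv_of_unit x hu, hxx, hhh]; ring

lemma pair_filter {e a : ℕ} (he : 2 ≤ e) (ha1 : a < 2^e) (ha2 : Odd a) :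
    ((Finset.range (2^e)).filter (fun j => Odd j)).filter
        (fun b => a ≡ b [MOD 2^(e-1)])
      = {a, (if a < 2^(e-1) then a + 2^(e-1) else a - 2^(e-1))} := by
  have hmpos : 0 < 2^(e-1) := by positivity
  have h2m : (2:ℕ)^e = 2 * 2^(e-1) := by rw [← pow_succ']; congr 1; omega
  have haodd : a % 2 = 1 := Nat.odd_iff.mp ha2
  have hmev : 2^(e-1) % 2 = 0 := Nat.even_iff.mp (by
    exact (Nat.even_pow.mpr ⟨even_two, by omega⟩))
  ext b
  simp only [mem_filter, mem_range, mem_insert, mem_singleton]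
  constructor
  · rintro ⟨⟨hb1, hb2⟩, hmod⟩
    have hmod' : a % 2^(e-1) = b % 2^(e-1) := hmod
    obtain ⟨qa, ra, hra, haeq⟩ : ∃ q r, r < 2^(e-1) ∧ a = 2^(e-1)*q + r :=
      ⟨a / 2^(e-1), a % 2^(e-1), Nat.mod_lt _ hmpos, (Nat.div_add_mod a _).symm⟩
    obtain ⟨qb, rb, hrb, hbeq⟩ : ∃ q r, r < 2^(e-1) ∧ b = 2^(e-1)*q + r :=
      ⟨b / 2^(e-1), b % 2^(e-1), Nat.mod_lt _ hmpos, (Nat.div_add_mod b _).symm⟩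
    have hre : ra = rb := by
      have h1 : a % 2^(e-1) = ra := by
        rw [haeq, Nat.mul_add_mod, Nat.mod_eq_of_lt hra]
      have h2 : b % 2^(e-1) = rb := by
        rw [hbeq, Nat.mul_add_mod, Nat.mod_eq_of_lt hrb]
      omega
    have hqa : qa < 2 := by
      by_contra hc
      have : 2^(e-1) * 2 ≤ 2^(e-1) * qa := Nat.mul_le_mul_left _ (by omega)
      omega
    have hqb : qb < 2 := by
      by_contra hc
      have : 2^(e-1) * 2 ≤ 2^(e-1) * qb := Nat.mul_le_mul_left _ (by omega)
      omega
    split_ifs with hsplit <;> interval_cases qa <;> interval_cases qb <;> omega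
  · intro hb
    rcases hb with rfl | rfl
    · exact ⟨⟨ha1, ha2⟩, Nat.ModEq.refl _⟩
    · split_ifs with hsplit
      · refine ⟨⟨by omega, Nat.odd_iff.mpr (by omega)⟩, ?_⟩
        show a % 2^(e-1) = (a + 2^(e-1)) % 2^(e-1)
        rw [Nat.add_mod_right]
      · refine ⟨⟨by omega, Nat.odd_iff.mpr (by omega)⟩, ?_⟩
        show a % 2^(e-1) = (a - 2^(e-1)) % 2^(e-1)
        conv_lhs => rw [show a = (a - 2^(e-1)) + 2^(e-1) by omega]
        rw [Nat.add_mod_right]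

lemma pair_sum {e a : ℕ} (he : 2 ≤ e) (ha1 : a < 2^e) (ha2 : Odd a) :
    ∑ b ∈ ((Finset.range (2^e)).filter (fun j => Odd j)).filter
        (fun b => a ≡ b [MOD 2^(e-1)]), ((b : ZMod (2^e)))⁻¹
      = 2 * (a : ZMod (2^e))⁻¹ + ((2^(e-1) : ℕ) : ZMod (2^e)) := by
  have h2m : (2:ℕ)^e = 2 * 2^(e-1) := by rw [← pow_succ']; congr 1; omega
  have haodd : a % 2 = 1 := Nat.odd_iff.mp ha2
  have hmev : 2^(e-1) % 2 = 0 := Nat.even_iff.mp (by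
    exact (Nat.even_pow.mpr ⟨even_two, by omega⟩))
  have h2h : 2 * ((2^(e-1) : ℕ) : ZMod (2^e)) = 0 := by
    rw [show (2 : ZMod (2^e)) = ((2:ℕ) : ZMod (2^e)) by push_cast; ring,
      ← Nat.cast_mul, show 2 * 2^(e-1) = 2^e by omega, ZMod.natCast_self]
  rw [pair_filter he ha1 ha2]
  have hne : a ≠ (if a < 2^(e-1) then a + 2^(e-1) else a - 2^(e-1)) := by
    split_ifs <;> omega
  rw [Finset.sum_pair hne]
  split_ifs with hsplit
  · rw [show (((a + 2^(e-1) : ℕ)) : ZMod (2^e)) = (a : ZMod (2^e)) + ((2^(e-1):ℕ) : ZMod (2^e)) by push_cast; ring]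
    rw [inv_add_half he ha2]
    ring
  · have hcast : (((a - 2^(e-1) : ℕ)) : ZMod (2^e))
        = (a : ZMod (2^e)) + ((2^(e-1):ℕ) : ZMod (2^e)) := by
      have hle : 2^(e-1) ≤ a := by omega
      rw [Nat.cast_sub hle]
      have : ((2^(e-1):ℕ) : ZMod (2^e)) + ((2^(e-1):ℕ) : ZMod (2^e)) = 0 := by
        rw [← two_mul]; exact h2h
      linear_combination -this
    rw [hcast, inv_add_half he ha2]
    ring
open Finset

lemma term_cast {e a b : ℕ}
    (ha : a ∈ (Finset.range (2^e)).filter (fun j => Odd j))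
    (hb : b ∈ (Finset.range (2^e)).filter (fun j => Odd j)) (hab : a ≠ b) :
    (((∏ j ∈ (Finset.range (2^e)).filter (fun j => Odd j), j) / (a * b) : ℕ) : ZMod (2^e))
      = ((∏ j ∈ (Finset.range (2^e)).filter (fun j => Odd j), j : ℕ) : ZMod (2^e))
        * ((a : ZMod (2^e)))⁻¹ * ((b : ZMod (2^e)))⁻¹ := by
  have haodd : Odd a := (mem_filter.mp ha).2
  have hbodd : Odd b := (mem_filter.mp hb).2
  have hbmem : b ∈ ((Finset.range (2^e)).filter (fun j => Odd j)).erase a :=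
    mem_erase.mpr ⟨hab.symm, hb⟩
  set S := (Finset.range (2^e)).filter (fun j => Odd j) with hS
  set c := ∏ j ∈ (S.erase a).erase b, j with hc
  have hP : ∏ j ∈ S, j = a * b * c := by
    rw [← Finset.mul_prod_erase S _ (mem_filter.mpr (mem_filter.mp ha)),
      ← Finset.mul_prod_erase (S.erase a) _ hbmem, mul_assoc]
  have hpos : 0 < a * b :=
    Nat.mul_pos haodd.pos hbodd.pos
  rw [hP, Nat.mul_div_cancel_left c hpos]
  have hua : IsUnit ((a : ZMod (2^e))) := odd_isUnit haodd
  have hub : IsUnit ((b : ZMod (2^e))) := odd_isUnit hbodd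
  push_cast
  calc (c : ZMod (2^e))
      = ((a:ZMod (2^e)) * (a:ZMod (2^e))⁻¹) * ((b:ZMod (2^e)) * (b:ZMod (2^e))⁻¹) * c := by
        rw [ZMod.mul_inv_of_unit _ hua, ZMod.mul_inv_of_unit _ hub]; ring
    _ = (a:ZMod (2^e)) * (b:ZMod (2^e)) * c * (a:ZMod (2^e))⁻¹ * (b:ZMod (2^e))⁻¹ := by ring
open Finset

theorem T1_mod (e : ℕ) (he : 3 ≤ e) :
    (2 ^ (e - 1) : ℕ) ∣
      ∑ a ∈ (Finset.range (2 ^ e)).filter (fun j => Odd j),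
        ∑ b ∈ ((Finset.range (2 ^ e)).filter (fun j => Odd j)).filter
            (fun b => a < b ∧ ¬ a ≡ b [MOD 2 ^ (e - 1)]),
          (∏ j ∈ (Finset.range (2 ^ e)).filter (fun j => Odd j), j) / (a * b) := by
  set S := (Finset.range (2 ^ e)).filter (fun j => Odd j) with hS
  set P := ∏ j ∈ S, j with hP
  set T := ∑ a ∈ S, ∑ b ∈ S.filter
      (fun b => a < b ∧ ¬ a ≡ b [MOD 2 ^ (e - 1)]), P / (a * b) with hT
  -- Step 1: symmetrize
  have hswap : T = ∑ a ∈ S, ∑ b ∈ S.filter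
      (fun b => b < a ∧ ¬ a ≡ b [MOD 2 ^ (e - 1)]), P / (a * b) := by
    rw [hT, Finset.sum_comm' (t' := S)
      (s' := fun y => S.filter (fun x => x < y ∧ ¬ x ≡ y [MOD 2 ^ (e - 1)]))
      (by intro x y; simp only [mem_filter]; tauto)]
    refine Finset.sum_congr rfl (fun a _ => ?_)
    refine Finset.sum_congr (Finset.filter_congr (fun b _ => ?_)) (fun b _ => by rw [mul_comm])
    exact and_congr_right (fun _ => not_congr ⟨Nat.ModEq.symm, Nat.ModEq.symm⟩)
  have hT2 : 2 * T = ∑ a ∈ S, ∑ b ∈ S.filter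
      (fun b => ¬ a ≡ b [MOD 2 ^ (e - 1)]), P / (a * b) := by
    rw [two_mul]
    nth_rewrite 2 [hswap]
    rw [hT, ← Finset.sum_add_distrib]
    refine Finset.sum_congr rfl (fun a _ => ?_)
    have hdisj : Disjoint
        (S.filter (fun b => a < b ∧ ¬ a ≡ b [MOD 2 ^ (e - 1)]))
        (S.filter (fun b => b < a ∧ ¬ a ≡ b [MOD 2 ^ (e - 1)])) := by
      rw [Finset.disjoint_left]
      intro b hb1 hb2
      simp only [mem_filter] at hb1 hb2
      omega
    rw [← Finset.sum_union hdisj]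
    congr 1
    rw [← Finset.filter_or]
    refine Finset.filter_congr (fun b _ => ?_)
    constructor
    · rintro (⟨-, h⟩ | ⟨-, h⟩) <;> exact h
    · intro h
      rcases Nat.lt_trichotomy a b with hlt | rfl | hgt
      · exact Or.inl ⟨hlt, h⟩
      · exact absurd (Nat.ModEq.refl _) h
      · exact Or.inr ⟨hgt, h⟩
  -- Step 2: reduce to a ZMod computation
  suffices hU : ((∑ a ∈ S, ∑ b ∈ S.filter
      (fun b => ¬ a ≡ b [MOD 2 ^ (e - 1)]), P / (a * b) : ℕ) : ZMod (2 ^ e)) = 0 by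
    have hdvd : 2 ^ e ∣ 2 * T := by
      rw [hT2]; exact (ZMod.natCast_eq_zero_iff _ _).mp hU
    obtain ⟨k, hk⟩ := hdvd
    refine ⟨k, Nat.eq_of_mul_eq_mul_left (show 0 < 2 by norm_num) ?_⟩
    rw [hk, ← mul_assoc, ← pow_succ']
    congr 2
    omega
  -- Step 3: compute in ZMod (2^e)
  have step1 : ((∑ a ∈ S, ∑ b ∈ S.filter
      (fun b => ¬ a ≡ b [MOD 2 ^ (e - 1)]), P / (a * b) : ℕ) : ZMod (2 ^ e))
      = ∑ a ∈ S, (P : ZMod (2 ^ e)) * ((a : ZMod (2 ^ e)))⁻¹ *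
          (∑ b ∈ S.filter (fun b => ¬ a ≡ b [MOD 2 ^ (e - 1)]), ((b : ZMod (2 ^ e)))⁻¹) := by
    rw [Nat.cast_sum]
    refine Finset.sum_congr rfl (fun a ha => ?_)
    rw [Nat.cast_sum, Finset.mul_sum]
    refine Finset.sum_congr rfl (fun b hb => ?_)
    have hbS : b ∈ S := (mem_filter.mp hb).1
    have hne : a ≠ b := fun h => (mem_filter.mp hb).2 (h ▸ Nat.ModEq.refl _)
    exact term_cast ha hbS hne
  have inner : ∀ a ∈ S,
      ∑ b ∈ S.filter (fun b => ¬ a ≡ b [MOD 2 ^ (e - 1)]), ((b : ZMod (2 ^ e)))⁻¹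
        = 0 - (2 * ((a : ZMod (2 ^ e)))⁻¹ + ((2 ^ (e - 1) : ℕ) : ZMod (2 ^ e))) := by
    intro a ha
    have hsplit := Finset.sum_filter_add_sum_filter_not S
      (fun b => a ≡ b [MOD 2 ^ (e - 1)]) (fun b => ((b : ZMod (2 ^ e)))⁻¹)
    have h1 : ∑ b ∈ S.filter (fun b => a ≡ b [MOD 2 ^ (e - 1)]), ((b : ZMod (2 ^ e)))⁻¹
        = 2 * ((a : ZMod (2 ^ e)))⁻¹ + ((2 ^ (e - 1) : ℕ) : ZMod (2 ^ e)) :=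
      pair_sum (by omega) (mem_range.mp (mem_filter.mp ha).1) (mem_filter.mp ha).2
    have h0 : ∑ b ∈ S, ((b : ZMod (2 ^ e)))⁻¹ = 0 := C1 (by omega)
    rw [← h1, ← h0, ← hsplit]
    ring
  rw [step1]
  calc ∑ a ∈ S, (P : ZMod (2 ^ e)) * ((a : ZMod (2 ^ e)))⁻¹ *
          (∑ b ∈ S.filter (fun b => ¬ a ≡ b [MOD 2 ^ (e - 1)]), ((b : ZMod (2 ^ e)))⁻¹)
      = ∑ a ∈ S, (P : ZMod (2 ^ e)) * ((a : ZMod (2 ^ e)))⁻¹ *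
          (0 - (2 * ((a : ZMod (2 ^ e)))⁻¹ + ((2 ^ (e - 1) : ℕ) : ZMod (2 ^ e)))) :=
        Finset.sum_congr rfl (fun a ha => by rw [inner a ha])
    _ = ∑ a ∈ S, ((-(P : ZMod (2 ^ e)) * 2) * (((a : ZMod (2 ^ e)))⁻¹) ^ 2
          + (-(P : ZMod (2 ^ e)) * ((2 ^ (e - 1) : ℕ) : ZMod (2 ^ e))) * ((a : ZMod (2 ^ e)))⁻¹) :=
        Finset.sum_congr rfl (fun a _ => by ring)
    _ = (-(P : ZMod (2 ^ e)) * 2) * ∑ a ∈ S, (((a : ZMod (2 ^ e)))⁻¹) ^ 2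
          + (-(P : ZMod (2 ^ e)) * ((2 ^ (e - 1) : ℕ) : ZMod (2 ^ e)))
              * ∑ a ∈ S, ((a : ZMod (2 ^ e)))⁻¹ := by
        rw [Finset.sum_add_distrib, ← Finset.mul_sum, ← Finset.mul_sum]
    _ = -(P : ZMod (2 ^ e)) * (2 * ∑ a ∈ S, (((a : ZMod (2 ^ e)))⁻¹) ^ 2)
          + (-(P : ZMod (2 ^ e)) * ((2 ^ (e - 1) : ℕ) : ZMod (2 ^ e)))
              * ∑ a ∈ S, ((a : ZMod (2 ^ e)))⁻¹ := by ring
    _ = 0 := by rw [C3 (by omega), C1 (by omega)]; ring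
end
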